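/- arXiv:2105.05406 — 5 statements merged into one kernel-verified Lean document; each statement's English description precedes it below -/
import Mathlib

section
/- Fix d ≥ 2 and let y_1, …, y_l (l ≥ 1) be positive integers. Define μ^{(d)}_y = (d−1)·max over all cyclic shifts (w_1,…,w_l) of (y_1,…,y_l) of the quantity Σ_{i=1}^{l} (log w_i)/d^i. Then μ^{(d)}_y lies in the closure of H^{(d)}_irr = {h(T_M) : M binary irreducible}; more precisely, there exists a sequence (M_N)_{N≥1} of irreducible {0,1}-matrices with lim_{N→∞} h(T_{M_N}) = μ^{(d)}_y. -/
open Filter Real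

/-- `treeP d M n i` = number of `n`-blocks of the hom Markov tree-shift `T_M`
on the `d`-tree whose root label is `i`. -/
def treeP (d : ℕ) {ι : Type} [Fintype ι] (M : Matrix ι ι ℕ) : ℕ → ι → ℕ
  | 0, _ => 1
  | n + 1, i => (∑ j, M i j * treeP d M n j) ^ d

/-- `|Δ_n| = 1 + d + ⋯ + d^n`. -/
def deltaCard (d n : ℕ) : ℕ := ∑ i ∈ Finset.range (n + 1), d ^ i

/-- Topological entropy of the hom Markov tree-shift `T_M` on the `d`-tree. -/
noncomputable def treeEntropy (d : ℕ) {ι : Type} [Fintype ι] (M : Matrix ι ι ℕ) : ℝ :=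
  Filter.limsup (fun n => Real.log (∑ i, treeP d M n i) / (deltaCard d n : ℝ)) Filter.atTop

/-- `M` has entries in `{0,1}`. -/
def IsBinary {ι : Type} [Fintype ι] (M : Matrix ι ι ℕ) : Prop := ∀ i j, M i j ≤ 1

/-- `M` is irreducible. -/
def MatIrreducible {ι : Type} [Fintype ι] [DecidableEq ι] (M : Matrix ι ι ℕ) : Prop :=
  ∀ i j, ∃ n, 1 ≤ n ∧ 0 < (M ^ n) i j

/-- `M` is the block matrix `[[E_a, R],[O, E_b]]` with `R` binary of constant row sum `l`. -/
def IsMabl (a b l : ℕ) (M : Matrix (Fin (a + b)) (Fin (a + b)) ℕ) : Prop :=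
  (∀ i j, M i j ≤ 1) ∧
  (∀ i j : Fin (a + b), (i : ℕ) < a → (j : ℕ) < a → M i j = 1) ∧
  (∀ i j : Fin (a + b), a ≤ (i : ℕ) → a ≤ (j : ℕ) → M i j = 1) ∧
  (∀ i j : Fin (a + b), a ≤ (i : ℕ) → (j : ℕ) < a → M i j = 0) ∧
  (∀ i : Fin (a + b), (i : ℕ) < a → (∑ j : Fin (a + b), if a ≤ (j : ℕ) then M i j else 0) = l)


/-- Entropies of hom Markov tree-shifts with irreducible binary matrices. -/
def HsetIrr (d : ℕ) : Set ℝ :=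
  {x | ∃ k, 1 ≤ k ∧ ∃ M : Matrix (Fin k) (Fin k) ℕ,
    IsBinary M ∧ MatIrreducible M ∧ x = treeEntropy d M}

namespace MuAux

open Fin.CommRing

variable {l L : ℕ}

/-- The periodic word: position `s` carries `y (m₀ + s)` for `s.val < l`, else `1`. -/
def zz (y : Fin l → ℕ) (m₀ : Fin l) (L : ℕ) [NeZero L] (s : Fin L) : ℕ :=
  if h : (s : ℕ) < l then y (m₀ + ⟨(s : ℕ), h⟩) else 1

/-- class sizes: reversed word -/
def cc (y : Fin l → ℕ) (m₀ : Fin l) (L : ℕ) [NeZero L] (t : Fin L) : ℕ :=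
  zz y m₀ L (-t)

def AA (d : ℕ) (c : Fin L → ℕ) [NeZero L] : ℕ → Fin L → ℕ
  | 0, _ => 1
  | n+1, t => (c (t+1) * AA d c n (t+1)) ^ d

/-- log of the word entry -/
noncomputable def lzf (c : Fin L → ℕ) [NeZero L] (s : Fin L) : ℝ := Real.log (c (-s))

noncomputable def SS (d : ℕ) (c : Fin L → ℕ) [NeZero L] (n : ℕ) (s : Fin L) : ℝ :=
  ∑ j ∈ Finset.range n, ((d:ℝ)⁻¹) ^ (j+1) * lzf c (s + (j : Fin L))

variable [NeZero L] {d : ℕ} {c : Fin L → ℕ}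

lemma one_le_AA (hc : ∀ t, 1 ≤ c t) : ∀ n t, 1 ≤ AA d c n t := by
  intro n
  induction n with
  | zero => intro t; simp [AA]
  | succ n ih => intro t; exact Nat.one_le_pow _ _ (Nat.mul_pos (hc _) (ih _))

lemma lzf_nonneg (hc : ∀ t, 1 ≤ c t) (s : Fin L) : 0 ≤ lzf c s :=
  Real.log_nonneg (by exact_mod_cast hc _)

lemma log_AA' (hc : ∀ t, 1 ≤ c t) :
    ∀ n t, Real.log (AA d c n t) =
      ∑ i ∈ Finset.range n, (d:ℝ) ^ (i+1) * lzf c (-(t + (i : Fin L) + 1)) := by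
  intro n
  induction n with
  | zero => intro t; simp [AA]
  | succ n ih =>
    intro t
    have h1 : (0:ℝ) < (c (t+1) : ℝ) := by exact_mod_cast hc _
    have h2 : (0:ℝ) < (AA d c n (t+1) : ℝ) := by exact_mod_cast one_le_AA hc n (t+1)
    have hAA : AA d c (n+1) t = (c (t+1) * AA d c n (t+1)) ^ d := rfl
    have : Real.log (AA d c (n+1) t)
        = d * (Real.log (c (t+1)) + Real.log (AA d c n (t+1))) := by
      rw [hAA]
      push_cast
      rw [Real.log_pow, Real.log_mul h1.ne' h2.ne']
    rw [this, ih]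
    rw [Finset.sum_range_succ' (fun i => (d:ℝ) ^ (i+1) * lzf c (-(t + (i : Fin L) + 1))) n,
      add_comm, mul_add, Finset.mul_sum]
    have hlog : Real.log ((c (t+1) : ℕ) : ℝ) = lzf c (-(t + ((0:ℕ) : Fin L) + 1)) := by
      simp [lzf]
    congr 1
    · apply Finset.sum_congr rfl
      intro i _
      have hidx : (-(t + 1 + (i : Fin L) + 1)) = (-(t + ((i+1 : ℕ) : Fin L) + 1)) := by
        push_cast
        ring
      rw [← hidx]
      ring
    · rw [hlog]
      norm_num

lemma log_AA_eq_SS (hd : 2 ≤ d) (hc : ∀ t, 1 ≤ c t) (n : ℕ) (t : Fin L) :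
    Real.log (AA d c n t) = (d:ℝ) ^ (n+1) * SS d c n (-(t + (n : Fin L))) := by
  have hd0 : (0:ℝ) < (d:ℝ) := by positivity
  rw [log_AA' hc, SS, Finset.mul_sum]
  rw [← Finset.sum_range_reflect (fun i => (d:ℝ) ^ (i+1) * lzf c (-(t + (i : Fin L) + 1))) n]
  apply Finset.sum_congr rfl
  intro j hj
  rw [Finset.mem_range] at hj
  have e1 : n - 1 - j + 1 = n - j := by omega
  have e2 : (d:ℝ) ^ (n - j) = (d:ℝ) ^ (n+1) * ((d:ℝ)⁻¹) ^ (j+1) := by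
    rw [inv_pow, ← div_eq_mul_inv, eq_div_iff (by positivity), ← pow_add]
    congr 1
    omega
  have e3 : ((n - 1 - j : ℕ) : Fin L) = (n : Fin L) - (j : Fin L) - 1 := by
    have h : n - 1 - j = n - (j + 1) := by omega
    rw [h, Nat.cast_sub (by omega)]
    push_cast
    ring
  have e4 : (-(t + ((n - 1 - j : ℕ) : Fin L) + 1)) = (-(t + (n : Fin L)) + (j : Fin L)) := by
    rw [e3]; ring
  rw [e1, e2, e4]
  ring

lemma SS_term_nonneg (hc : ∀ t, 1 ≤ c t) (j : ℕ) (s : Fin L) :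
    0 ≤ ((d:ℝ)⁻¹) ^ (j+1) * lzf c s :=
  mul_nonneg (by positivity) (lzf_nonneg hc _)

lemma SS_nonneg (hc : ∀ t, 1 ≤ c t) (n : ℕ) (s : Fin L) : 0 ≤ SS d c n s :=
  Finset.sum_nonneg fun j _ => SS_term_nonneg hc j _

lemma SS_mono (hc : ∀ t, 1 ≤ c t) {a b : ℕ} (h : a ≤ b) (s : Fin L) :
    SS d c a s ≤ SS d c b s :=
  Finset.sum_le_sum_of_subset_of_nonneg (Finset.range_subset_range.2 h)
    (fun j _ _ => SS_term_nonneg hc j _)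

lemma SS_L_add (b : ℕ) (s : Fin L) :
    SS d c (L + b) s = SS d c L s + ((d:ℝ)⁻¹)^L * SS d c b s := by
  unfold SS
  rw [Finset.sum_range_add, Finset.mul_sum]
  congr 1
  apply Finset.sum_congr rfl
  intro j _
  have h1 : ((L + j : ℕ) : Fin L) = (j : Fin L) := by
    push_cast [Fin.natCast_self]
    simp
  rw [h1, ← mul_assoc, ← pow_add, Nat.add_assoc]

lemma SS_le_K (hd : 2 ≤ d) (hc : ∀ t, 1 ≤ c t) (hL : 1 ≤ L) {V : ℝ} (hV0 : 0 ≤ V)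
    (hU : ∀ s, SS d c L s ≤ V) : ∀ n s, SS d c n s ≤ V / (1 - ((d:ℝ)⁻¹)^L) := by
  have hdR : (2:ℝ) ≤ (d:ℝ) := by exact_mod_cast hd
  have hq0 : (0:ℝ) ≤ (d:ℝ)⁻¹ := by positivity
  have hq1 : (d:ℝ)⁻¹ < 1 := by
    rw [inv_lt_one_iff₀]; right; linarith
  have hqL : ((d:ℝ)⁻¹)^L < 1 := pow_lt_one₀ hq0 hq1 (by omega)
  have hqL0 : (0:ℝ) ≤ ((d:ℝ)⁻¹)^L := by positivity
  have hpos : (0:ℝ) < 1 - ((d:ℝ)⁻¹)^L := by linarith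
  have hKV : V ≤ V / (1 - ((d:ℝ)⁻¹)^L) := by
    rw [le_div_iff₀ hpos]
    nlinarith
  have hK : (V / (1 - ((d:ℝ)⁻¹)^L)) * (1 - ((d:ℝ)⁻¹)^L) = V := div_mul_cancel₀ _ hpos.ne'
  intro n
  induction n using Nat.strong_induction_on with
  | _ n ih =>
    intro s
    by_cases hn : n ≤ L
    · exact (SS_mono hc hn s).trans ((hU s).trans hKV)
    · have hsplit : n = L + (n - L) := by omega
      rw [hsplit, SS_L_add]
      have h2 := ih (n - L) (by omega) s
      have h3 : ((d:ℝ)⁻¹)^L * SS d c (n - L) s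
          ≤ ((d:ℝ)⁻¹)^L * (V / (1 - ((d:ℝ)⁻¹)^L)) :=
        mul_le_mul_of_nonneg_left h2 hqL0
      have h4 := hU s
      nlinarith [hK]

/-- the `V` function from the statement -/
noncomputable def Vf (d : ℕ) (y : Fin l → ℕ) (m : Fin l) : ℝ :=
  ∑ i : Fin l, Real.log (y (m + i)) / (d : ℝ) ^ ((i : ℕ) + 1)

lemma Vf_eq (d : ℕ) (y : Fin l → ℕ) (m : Fin l) :
    Vf d y m = ∑ i : Fin l, ((d:ℝ)⁻¹) ^ ((i : ℕ) + 1) * Real.log (y (m + i)) := by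
  unfold Vf
  apply Finset.sum_congr rfl
  intro i _
  rw [div_eq_mul_inv, inv_pow, mul_comm]

lemma Vf_nonneg (d : ℕ) (y : Fin l → ℕ) (hy : ∀ i, 1 ≤ y i) (m : Fin l) : 0 ≤ Vf d y m := by
  rw [Vf_eq]
  apply Finset.sum_nonneg
  intro i _
  exact mul_nonneg (by positivity) (Real.log_nonneg (by exact_mod_cast hy _))

lemma lzf_cc (y : Fin l → ℕ) (m₀ : Fin l) (v : Fin L) :
    lzf (cc y m₀ L) v
      = if h : (v : ℕ) < l then Real.log (y (m₀ + ⟨(v : ℕ), h⟩)) else 0 := by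
  unfold lzf cc zz
  rw [neg_neg]
  by_cases h : (v : ℕ) < l
  · rw [dif_pos h, dif_pos h]
  · rw [dif_neg h, dif_neg h]
    push_cast
    exact Real.log_one

lemma SS_L_eq_sum_fin (s : Fin L) :
    SS d c L s = ∑ v : Fin L, ((d:ℝ)⁻¹) ^ (((v - s : Fin L) : ℕ) + 1) * lzf c v := by
  unfold SS
  rw [← Fin.sum_univ_eq_sum_range (fun j => ((d:ℝ)⁻¹) ^ (j+1) * lzf c (s + (j : Fin L))) L]
  rw [← Equiv.sum_comp (Equiv.addLeft s)
    (fun v => ((d:ℝ)⁻¹) ^ (((v - s : Fin L) : ℕ) + 1) * lzf c v)]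
  apply Finset.sum_congr rfl
  intro j _
  simp [Fin.cast_val_eq_self, add_sub_cancel_left]

lemma one_le_cc (y : Fin l → ℕ) (hy : ∀ i, 1 ≤ y i) (m₀ : Fin l) (t : Fin L) :
    1 ≤ cc y m₀ L t := by
  unfold cc zz
  split
  · exact hy _
  · exact le_refl 1

lemma lzf_cc_pos (y : Fin l → ℕ) (m₀ : Fin l) (v : Fin L) (hv : (v : ℕ) < l) :
    lzf (cc y m₀ L) v = Real.log (y (m₀ + ⟨(v : ℕ), hv⟩)) := by
  rw [lzf_cc, dif_pos hv]

lemma lzf_cc_zero (y : Fin l → ℕ) (m₀ : Fin l) (v : Fin L) (hv : ¬ (v : ℕ) < l) :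
    lzf (cc y m₀ L) v = 0 := by
  rw [lzf_cc, dif_neg hv]

lemma SS_L_cc_eq (hl : 1 ≤ l) (hlL : l ≤ L) (y : Fin l → ℕ) (m₀ : Fin l) (s : Fin L) :
    SS d (cc y m₀ L) L s
      = ∑ i : Fin l, ((d:ℝ)⁻¹) ^ (((Fin.castLE hlL i - s : Fin L) : ℕ) + 1)
          * Real.log (y (m₀ + i)) := by
  rw [SS_L_eq_sum_fin]
  rw [← Finset.sum_subset
    (Finset.filter_subset (fun v : Fin L => (v : ℕ) < l) Finset.univ)
    (fun v _ hv => by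
      rw [lzf_cc_zero y m₀ v (by simpa using hv), mul_zero])]
  apply Finset.sum_nbij'
    (i := fun v : Fin L => (⟨(v : ℕ) % l, Nat.mod_lt _ (by omega)⟩ : Fin l))
    (j := fun i : Fin l => Fin.castLE hlL i)
  · intro v _; exact Finset.mem_univ _
  · intro i _
    simp only [Finset.mem_filter, Finset.mem_univ, true_and, Fin.coe_castLE]
    exact i.isLt
  · intro v hv
    rw [Finset.mem_filter] at hv
    apply Fin.ext
    simp [Nat.mod_eq_of_lt hv.2]
  · intro i _
    apply Fin.ext
    simp [Nat.mod_eq_of_lt i.isLt]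
  · intro v hv
    rw [Finset.mem_filter] at hv
    rw [lzf_cc_pos y m₀ v hv.2]
    have h1 : (⟨(v : ℕ) % l, Nat.mod_lt _ (by omega)⟩ : Fin l) = ⟨(v : ℕ), hv.2⟩ :=
      Fin.ext (Nat.mod_eq_of_lt hv.2)
    rw [h1]
    have h2 : Fin.castLE hlL (⟨(v : ℕ), hv.2⟩ : Fin l) = v := Fin.ext rfl
    rw [h2]

lemma key_U_le (hd : 2 ≤ d) (hl : 1 ≤ l) (hlL : l ≤ L) (y : Fin l → ℕ) (hy : ∀ i, 1 ≤ y i)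
    (m₀ : Fin l) (s : Fin L) :
    SS d (cc y m₀ L) L s
      ≤ Finset.univ.sup' ⟨⟨0, hl⟩, Finset.mem_univ _⟩ (Vf d y) := by
  haveI : NeZero l := ⟨by omega⟩
  have hq0 : (0:ℝ) ≤ (d:ℝ)⁻¹ := by positivity
  have hd1 : (1:ℝ) ≤ (d:ℝ) := by exact_mod_cast Nat.one_le_of_lt hd
  have hq1 : (d:ℝ)⁻¹ ≤ 1 := inv_le_one_of_one_le₀ hd1
  have hlog : ∀ m : Fin l, 0 ≤ Real.log (y m) := fun m =>
    Real.log_nonneg (by exact_mod_cast hy m)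
  rw [SS_L_cc_eq hl hlL y m₀ s]
  by_cases hs : (s : ℕ) < l
  · refine le_trans ?_ (Finset.le_sup' (Vf d y) (Finset.mem_univ (m₀ + ⟨(s : ℕ), hs⟩)))
    have hVf : Vf d y (m₀ + ⟨(s : ℕ), hs⟩)
        = ∑ i : Fin l, ((d:ℝ)⁻¹) ^ (((i - ⟨(s : ℕ), hs⟩ : Fin l) : ℕ) + 1)
            * Real.log (y (m₀ + i)) := by
      rw [Vf_eq]
      rw [← Equiv.sum_comp (Equiv.addLeft (⟨(s : ℕ), hs⟩ : Fin l))
        (fun i => ((d:ℝ)⁻¹) ^ (((i - ⟨(s : ℕ), hs⟩ : Fin l) : ℕ) + 1)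
          * Real.log (y (m₀ + i)))]
      apply Finset.sum_congr rfl
      intro i _
      simp only [Equiv.coe_addLeft, add_sub_cancel_left]
      congr 2
      rw [add_assoc]
    rw [hVf]
    apply Finset.sum_le_sum
    intro i _
    refine mul_le_mul_of_nonneg_right ?_ (hlog _)
    apply pow_le_pow_of_le_one hq0 hq1
    have hvall : ((i - ⟨(s : ℕ), hs⟩ : Fin l) : ℕ) = ((l - (s : ℕ)) + (i : ℕ)) % l := by
      simp [Fin.sub_def]
    have hvalL : ((Fin.castLE hlL i - s : Fin L) : ℕ) = ((L - (s : ℕ)) + (i : ℕ)) % L := by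
      simp [Fin.sub_def]
    rw [hvall, hvalL]
    have hiL : (i : ℕ) < l := i.isLt
    have hsL : (s : ℕ) < L := s.isLt
    rcases le_or_gt (s : ℕ) (i : ℕ) with h | h
    · have e1 : l - (s : ℕ) + (i : ℕ) = l + ((i : ℕ) - (s : ℕ)) := by omega
      have e2 : L - (s : ℕ) + (i : ℕ) = L + ((i : ℕ) - (s : ℕ)) := by omega
      rw [e1, e2, Nat.add_mod_left, Nat.add_mod_left,
        Nat.mod_eq_of_lt (by omega), Nat.mod_eq_of_lt (by omega)]
    · rw [Nat.mod_eq_of_lt (by omega), Nat.mod_eq_of_lt (by omega)]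
      omega
  · refine le_trans ?_ (Finset.le_sup' (Vf d y) (Finset.mem_univ m₀))
    rw [Vf_eq]
    apply Finset.sum_le_sum
    intro i _
    refine mul_le_mul_of_nonneg_right ?_ (hlog _)
    apply pow_le_pow_of_le_one hq0 hq1
    have hvalL : ((Fin.castLE hlL i - s : Fin L) : ℕ) = ((L - (s : ℕ)) + (i : ℕ)) % L := by
      simp [Fin.sub_def]
    rw [hvalL]
    have hiL : (i : ℕ) < l := i.isLt
    have hsL : (s : ℕ) < L := s.isLt
    rw [Nat.mod_eq_of_lt (by omega)]
    omega

lemma lzf_cc_small (hlL : l ≤ L) (y : Fin l → ℕ) (m₀ : Fin l) {j : ℕ} (hj : j < l) :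
    lzf (cc y m₀ L) ((j : ℕ) : Fin L) = Real.log (y (m₀ + ⟨j, hj⟩)) := by
  have hv : (((j : ℕ) : Fin L) : ℕ) = j := Fin.val_cast_of_lt (by omega)
  rw [lzf_cc_pos y m₀ _ (by rw [hv]; exact hj)]
  exact congrArg (fun z => Real.log ((y (m₀ + z) : ℕ) : ℝ)) (Fin.ext hv)

lemma Vf_le_SS (hd : 2 ≤ d) (hl : 1 ≤ l) (hlL : l ≤ L) (y : Fin l → ℕ) (hy : ∀ i, 1 ≤ y i)
    (m₀ : Fin l) {n : ℕ} (hn : l ≤ n) :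
    Vf d y m₀ ≤ SS d (cc y m₀ L) n (0 : Fin L) := by
  have h1 : Vf d y m₀ = SS d (cc y m₀ L) l (0 : Fin L) := by
    rw [Vf_eq, SS]
    rw [← Fin.sum_univ_eq_sum_range
      (fun j => ((d:ℝ)⁻¹) ^ (j+1) * lzf (cc y m₀ L) ((0 : Fin L) + (j : Fin L))) l]
    apply Finset.sum_congr rfl
    intro i _
    rw [zero_add, lzf_cc_small hlL y m₀ i.isLt]
  rw [h1]
  exact SS_mono (one_le_cc y hy m₀) hn _

/-! ### The matrix -/

def M0 (c : Fin L → ℕ) [NeZero L] : Matrix ((t : Fin L) × Fin (c t)) ((t : Fin L) × Fin (c t)) ℕ :=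
  fun p q => if q.1 = p.1 + 1 then 1 else 0

lemma M0_binary (c : Fin L → ℕ) : IsBinary (M0 c) := by
  intro p q
  unfold M0
  split <;> omega

lemma sum_fiber (c : Fin L → ℕ) (f : Fin L → ℕ) :
    ∑ q : (t : Fin L) × Fin (c t), f q.1 = ∑ t : Fin L, c t * f t := by
  rw [← Finset.univ_sigma_univ, Finset.sum_sigma]
  apply Finset.sum_congr rfl
  intro t _
  show ∑ _a : Fin (c t), f t = _
  rw [Finset.sum_const, Finset.card_univ, Fintype.card_fin, smul_eq_mul]

lemma treeP_M0 (d : ℕ) (c : Fin L → ℕ) :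
    ∀ n (p : (t : Fin L) × Fin (c t)), treeP d (M0 c) n p = AA d c n p.1 := by
  intro n
  induction n with
  | zero => intro p; rfl
  | succ n ih =>
    intro p
    show (∑ q, M0 c p q * treeP d (M0 c) n q) ^ d = (c (p.1+1) * AA d c n (p.1+1)) ^ d
    congr 1
    have h1 : ∀ q : (t : Fin L) × Fin (c t),
        M0 c p q * treeP d (M0 c) n q = (if q.1 = p.1 + 1 then AA d c n q.1 else 0) := by
      intro q
      rw [ih q]
      unfold M0
      split <;> simp
    rw [Finset.sum_congr rfl (fun q _ => h1 q)]
    rw [← Finset.univ_sigma_univ, Finset.sum_sigma]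
    have h2 : ∀ t : Fin L,
        (∑ _a : Fin (c t), if t = p.1 + 1 then AA d c n t else 0)
          = if t = p.1 + 1 then c t * AA d c n t else 0 := by
      intro t
      rw [Finset.sum_const, Finset.card_univ, Fintype.card_fin, smul_eq_mul]
      split <;> simp
    rw [Finset.sum_congr rfl (fun t _ => h2 t)]
    rw [Finset.sum_ite_eq' Finset.univ (p.1+1) (fun t => c t * AA d c n t)]
    simp

lemma sum_treeP_M0 (d : ℕ) (c : Fin L → ℕ) (n : ℕ) :
    ∑ p : (t : Fin L) × Fin (c t), treeP d (M0 c) n p = ∑ t : Fin L, c t * AA d c n t := by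
  rw [Finset.sum_congr rfl (fun p _ => treeP_M0 d c n p)]
  exact sum_fiber c _

lemma M0_pow_pos (c : Fin L → ℕ) (hc : ∀ t, 1 ≤ c t) :
    ∀ n : ℕ, 1 ≤ n → ∀ (p q : (t : Fin L) × Fin (c t)), q.1 = p.1 + ((n : ℕ) : Fin L) →
      0 < (M0 c ^ n) p q := by
  intro n
  induction n with
  | zero => omega
  | succ n ih =>
    intro _ p q hq
    rcases Nat.eq_zero_or_pos n with h1 | h1
    · subst h1
      have h2 : M0 c ^ (0+1) = M0 c := pow_one _
      rw [h2]
      unfold M0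
      rw [if_pos (by rw [hq]; norm_num)]
      omega
    · have hn1 : 1 ≤ n := h1
      have hmul : (M0 c ^ (n+1)) p q = ∑ r, (M0 c ^ n) p r * M0 c r q := by
        rw [pow_succ, Matrix.mul_apply]
      rw [hmul]
      set r₀ : (t : Fin L) × Fin (c t) := ⟨p.1 + ((n : ℕ) : Fin L), ⟨0, hc _⟩⟩ with hr₀
      have hpos : 0 < (M0 c ^ n) p r₀ * M0 c r₀ q := by
        apply Nat.mul_pos
        · exact ih hn1 p r₀ rfl
        · unfold M0
          rw [if_pos (by rw [hq]; push_cast; ring)]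
          omega
      calc 0 < (M0 c ^ n) p r₀ * M0 c r₀ q := hpos
        _ ≤ ∑ r, (M0 c ^ n) p r * M0 c r q :=
          Finset.single_le_sum (f := fun r => (M0 c ^ n) p r * M0 c r q)
            (fun r _ => Nat.zero_le _) (Finset.mem_univ r₀)

lemma M0_irred (c : Fin L → ℕ) (hc : ∀ t, 1 ≤ c t) : MatIrreducible (M0 c) := by
  intro p q
  refine ⟨((q.1 - p.1 : Fin L) : ℕ) + L, by have := NeZero.pos L; omega, ?_⟩
  apply M0_pow_pos c hc _ (by have := NeZero.pos L; omega)
  have : ((((q.1 - p.1 : Fin L) : ℕ) + L : ℕ) : Fin L) = q.1 - p.1 := by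
    push_cast [Fin.natCast_self, Fin.cast_val_eq_self]
    ring
  rw [this]
  ring

/-! ### transport along an equiv -/

lemma treeP_submatrix {ι : Type} [Fintype ι] [DecidableEq ι] (d : ℕ) (M : Matrix ι ι ℕ)
    {k : ℕ} (e : Fin k ≃ ι) :
    ∀ n i, treeP d (M.submatrix e e) n i = treeP d M n (e i) := by
  intro n
  induction n with
  | zero => intro i; rfl
  | succ n ih =>
    intro i
    show (∑ j, M.submatrix e e i j * treeP d (M.submatrix e e) n j) ^ d
      = (∑ j, M (e i) j * treeP d M n j) ^ d
    congr 1
    rw [← Equiv.sum_comp e (fun j => M (e i) j * treeP d M n j)]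
    apply Finset.sum_congr rfl
    intro j _
    rw [ih j]
    rfl

lemma sum_treeP_submatrix {ι : Type} [Fintype ι] [DecidableEq ι] (d : ℕ) (M : Matrix ι ι ℕ)
    {k : ℕ} (e : Fin k ≃ ι) (n : ℕ) :
    ∑ i, treeP d (M.submatrix e e) n i = ∑ i, treeP d M n i := by
  rw [Finset.sum_congr rfl (fun i _ => treeP_submatrix d M e n i)]
  exact Equiv.sum_comp e (treeP d M n)

lemma treeEntropy_submatrix {ι : Type} [Fintype ι] [DecidableEq ι] (d : ℕ) (M : Matrix ι ι ℕ)
    {k : ℕ} (e : Fin k ≃ ι) :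
    treeEntropy d (M.submatrix e e) = treeEntropy d M := by
  unfold treeEntropy
  congr 1
  funext n
  have h : ∑ i : Fin k, ((treeP d (M.submatrix e e) n i : ℕ) : ℝ)
      = ∑ i : ι, ((treeP d M n i : ℕ) : ℝ) := by
    rw [Finset.sum_congr rfl (fun i _ => by rw [treeP_submatrix d M e n i])]
    exact Equiv.sum_comp e (fun i => ((treeP d M n i : ℕ) : ℝ))
  rw [h]

lemma submatrix_pow {ι : Type} [Fintype ι] [DecidableEq ι] (M : Matrix ι ι ℕ)
    {k : ℕ} (e : Fin k ≃ ι) (n : ℕ) :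
    (M.submatrix e e) ^ n = (M ^ n).submatrix e e := by
  induction n with
  | zero => rw [pow_zero, pow_zero, Matrix.submatrix_one_equiv]
  | succ n ih => rw [pow_succ, pow_succ, ih, Matrix.submatrix_mul_equiv]

lemma irred_submatrix {ι : Type} [Fintype ι] [DecidableEq ι] (M : Matrix ι ι ℕ)
    {k : ℕ} (e : Fin k ≃ ι) (h : MatIrreducible M) : MatIrreducible (M.submatrix e e) := by
  intro i j
  obtain ⟨n, hn1, hn⟩ := h (e i) (e j)
  exact ⟨n, hn1, by rw [submatrix_pow]; exact hn⟩

end MuAux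

open MuAux Fin.CommRing in
lemma main_aux {d l : ℕ} (hd : 2 ≤ d) (hl : 1 ≤ l) (y : Fin l → ℕ) (hy : ∀ i, 1 ≤ y i)
    (L : ℕ) (hlL : l ≤ L) :
    ∃ k, 1 ≤ k ∧ ∃ M : Matrix (Fin k) (Fin k) ℕ, IsBinary M ∧ MatIrreducible M ∧
      ((d:ℝ) - 1) * Finset.univ.sup' ⟨⟨0, hl⟩, Finset.mem_univ _⟩ (Vf d y) ≤ treeEntropy d M ∧
      treeEntropy d M ≤ (((d:ℝ) - 1) * Finset.univ.sup' ⟨⟨0, hl⟩, Finset.mem_univ _⟩ (Vf d y))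
        / (1 - ((d:ℝ)⁻¹)^L) := by
  haveI : NeZero L := ⟨by omega⟩
  obtain ⟨m₀, _, hm₀⟩ := Finset.exists_mem_eq_sup'
    (⟨⟨0, hl⟩, Finset.mem_univ _⟩ : (Finset.univ : Finset (Fin l)).Nonempty) (Vf d y)
  set V : ℝ := Finset.univ.sup' ⟨⟨0, hl⟩, Finset.mem_univ _⟩ (Vf d y) with hV
  set c : Fin L → ℕ := cc y m₀ L with hcdef
  have hc : ∀ t, 1 ≤ c t := one_le_cc y hy m₀
  haveI : Nonempty ((t : Fin L) × Fin (c t)) := ⟨⟨0, ⟨0, hc 0⟩⟩⟩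
  set e := (Fintype.equivFin ((t : Fin L) × Fin (c t))).symm with he
  refine ⟨Fintype.card ((t : Fin L) × Fin (c t)), Fintype.card_pos,
    (M0 c).submatrix e e, fun i j => M0_binary c _ _, irred_submatrix _ e (M0_irred c hc), ?_⟩
  rw [treeEntropy_submatrix]
  -- real-number setup
  have hd1 : (1:ℝ) < (d:ℝ) := by exact_mod_cast (by omega : 1 < d)
  have hq0 : (0:ℝ) ≤ (d:ℝ)⁻¹ := by positivity
  have hq1 : (d:ℝ)⁻¹ < 1 := by rw [inv_lt_one_iff₀]; right; exact hd1
  have hqL : ((d:ℝ)⁻¹)^L < 1 := pow_lt_one₀ hq0 hq1 (by omega)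
  have hqpos : (0:ℝ) < 1 - ((d:ℝ)⁻¹)^L := by linarith
  have hV0 : 0 ≤ V := hm₀ ▸ Vf_nonneg d y hy m₀
  set K : ℝ := V / (1 - ((d:ℝ)⁻¹)^L) with hK
  have hK0 : 0 ≤ K := div_nonneg hV0 hqpos.le
  have hUle : ∀ s, SS d c L s ≤ V := fun s => key_U_le hd hl hlL y hy m₀ s
  have hSSle : ∀ n s, SS d c n s ≤ K := SS_le_K hd hc (by omega) hV0 hUle
  -- the counting sequence
  set P : ℕ → ℕ := fun n => ∑ t, c t * AA d c n t with hPdef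
  have hP1 : ∀ n, 1 ≤ P n := by
    intro n
    have h1 : 1 ≤ c 0 * AA d c n 0 := Nat.one_le_iff_ne_zero.2 (Nat.mul_ne_zero
      (Nat.one_le_iff_ne_zero.1 (hc 0)) (Nat.one_le_iff_ne_zero.1 (one_le_AA hc n 0)))
    exact le_trans h1 (Finset.single_le_sum (f := fun t => c t * AA d c n t)
      (fun t _ => Nat.zero_le _) (Finset.mem_univ 0))
  have hPn : ∀ n, ∑ p : (t : Fin L) × Fin (c t), (treeP d (M0 c) n p : ℝ) = ((P n : ℕ) : ℝ) := by
    intro n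
    rw [hPdef]
    push_cast [← sum_treeP_M0 d c n]
    rfl
  set kk : ℕ := Fintype.card ((t : Fin L) × Fin (c t)) with hkk
  have hkk1 : 1 ≤ kk := Fintype.card_pos
  have hkk0 : (0:ℝ) < (kk : ℝ) := by exact_mod_cast Nat.lt_of_lt_of_le Nat.zero_lt_one hkk1
  have hcard : kk = ∑ t, c t := by
    rw [hkk, Fintype.card_sigma]
    simp
  have hlogkk0 : 0 ≤ Real.log kk := Real.log_nonneg (by exact_mod_cast hkk1)
  -- upper bound on log P n
  have hPub : ∀ n, Real.log (P n) ≤ Real.log kk + (d:ℝ)^(n+1) * K := by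
    intro n
    obtain ⟨t₁, _, ht₁⟩ := Finset.exists_mem_eq_sup (Finset.univ : Finset (Fin L))
      ⟨0, Finset.mem_univ 0⟩ (AA d c n)
    have hsum_le : P n ≤ kk * AA d c n t₁ := by
      calc P n ≤ ∑ t, c t * AA d c n t₁ :=
            Finset.sum_le_sum (fun t _ =>
              Nat.mul_le_mul_left _ (ht₁ ▸ Finset.le_sup (Finset.mem_univ t)))
        _ = (∑ t, c t) * AA d c n t₁ := (Finset.sum_mul _ _ _).symm
        _ = kk * AA d c n t₁ := by rw [hcard]
    have hA1 : 1 ≤ AA d c n t₁ := one_le_AA hc n t₁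
    have hA0 : (0:ℝ) < (AA d c n t₁ : ℝ) := by
      exact_mod_cast Nat.lt_of_lt_of_le Nat.zero_lt_one hA1
    have hlog1 : Real.log (P n) ≤ Real.log ((kk * AA d c n t₁ : ℕ) : ℝ) :=
      Real.log_le_log (by exact_mod_cast hP1 n) (by exact_mod_cast hsum_le)
    have hlog2 : Real.log ((kk * AA d c n t₁ : ℕ) : ℝ)
        = Real.log kk + Real.log (AA d c n t₁) := by
      push_cast
      rw [Real.log_mul hkk0.ne' hA0.ne']
    have hlog3 : Real.log (AA d c n t₁) ≤ (d:ℝ)^(n+1) * K := by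
      rw [log_AA_eq_SS hd hc n t₁]
      exact mul_le_mul_of_nonneg_left (hSSle n _) (by positivity)
    linarith
  -- lower bound on log P n
  have hPlb : ∀ n, l ≤ n → (d:ℝ)^(n+1) * V ≤ Real.log (P n) := by
    intro n hn
    set t₂ : Fin L := -(((n : ℕ) : Fin L)) with ht₂
    have h1 : AA d c n t₂ ≤ P n := by
      calc AA d c n t₂ ≤ c t₂ * AA d c n t₂ := Nat.le_mul_of_pos_left _ (hc t₂)
        _ ≤ P n := Finset.single_le_sum (f := fun t => c t * AA d c n t)
            (fun t _ => Nat.zero_le _) (Finset.mem_univ t₂)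
    have h2 : Real.log (AA d c n t₂) ≤ Real.log (P n) :=
      Real.log_le_log (by exact_mod_cast one_le_AA hc n t₂) (by exact_mod_cast h1)
    have h3 : Real.log (AA d c n t₂) = (d:ℝ)^(n+1) * SS d c n 0 := by
      rw [log_AA_eq_SS hd hc n t₂]
      congr 2
      rw [ht₂, neg_add_cancel, neg_zero]
    have h4 : V ≤ SS d c n 0 := by
      rw [hm₀]
      exact Vf_le_SS hd hl hlL y hy m₀ hn
    nlinarith [pow_pos (lt_trans one_pos hd1) (n+1)]
  -- delta facts
  have hdelta : ∀ n : ℕ, (deltaCard d n : ℝ) = ((d:ℝ)^(n+1) - 1)/((d:ℝ) - 1) := by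
    intro n
    unfold deltaCard
    push_cast
    rw [geom_sum_eq (by linarith : (d:ℝ) ≠ 1)]
  have hx1 : ∀ n : ℕ, (1:ℝ) < (d:ℝ)^(n+1) := fun n => one_lt_pow₀ hd1 (by omega)
  have hdpos : ∀ n : ℕ, (0:ℝ) < (deltaCard d n : ℝ) := by
    intro n
    rw [hdelta n]
    have := hx1 n
    apply div_pos <;> linarith
  -- the entropy sequence
  set E : ℕ → ℝ := fun n =>
    Real.log (∑ p : (t : Fin L) × Fin (c t), (treeP d (M0 c) n p : ℝ)) / (deltaCard d n : ℝ)
    with hE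
  have hent : treeEntropy d (M0 c) = Filter.limsup E Filter.atTop := rfl
  have hEn : ∀ n, E n = Real.log ((P n : ℕ) : ℝ) / (deltaCard d n : ℝ) := by
    intro n
    simp only [hE]
    rw [hPn n]
  have hE0 : ∀ n, 0 ≤ E n := by
    intro n
    rw [hEn n]
    exact div_nonneg (Real.log_nonneg (by exact_mod_cast hP1 n)) (hdpos n).le
  set Bnd : ℕ → ℝ := fun n =>
    ((d:ℝ) - 1) * ((Real.log kk + (d:ℝ)^(n+1) * K) / ((d:ℝ)^(n+1) - 1)) with hBnd
  have hEB : ∀ n, E n ≤ Bnd n := by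
    intro n
    have hx := hx1 n
    rw [hEn n, hdelta n, div_div_eq_mul_div]
    simp only [hBnd]
    rw [mul_div_assoc']
    rw [div_le_div_iff₀ (by linarith) (by linarith)]
    have h := hPub n
    nlinarith [mul_le_mul_of_nonneg_right h
      (mul_nonneg (by linarith : (0:ℝ) ≤ (d:ℝ) - 1)
        (by linarith : (0:ℝ) ≤ (d:ℝ)^(n+1) - 1))]
  have hxT : Filter.Tendsto (fun n : ℕ => (d:ℝ)^(n+1)) Filter.atTop Filter.atTop := by
    have h := tendsto_pow_atTop_atTop_of_one_lt hd1
    exact h.comp (Filter.tendsto_add_atTop_nat 1)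
  have hinvT : Filter.Tendsto (fun n : ℕ => ((d:ℝ)^(n+1) - 1)⁻¹) Filter.atTop (nhds 0) := by
    apply Filter.Tendsto.comp tendsto_inv_atTop_zero
    exact Filter.tendsto_atTop_add_const_right Filter.atTop (-1) hxT
  have hBndT : Filter.Tendsto Bnd Filter.atTop (nhds (((d:ℝ) - 1) * K)) := by
    have hgen : ∀ a b x : ℝ, x - 1 ≠ 0 → (a + x*b)/(x-1) = b + (a+b)*(x-1)⁻¹ := by
      intro a b x hx
      field_simp
      ring
    have h3 : ∀ n : ℕ, Bnd n
        = ((d:ℝ) - 1) * (K + (Real.log kk + K) * (((d:ℝ)^(n+1) - 1)⁻¹)) := by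
      intro n
      have hx := hx1 n
      simp only [hBnd]
      rw [hgen _ _ _ (by linarith)]
    have h4 : Filter.Tendsto
        (fun n : ℕ => ((d:ℝ) - 1) * (K + (Real.log kk + K) * (((d:ℝ)^(n+1) - 1)⁻¹)))
        Filter.atTop (nhds (((d:ℝ) - 1) * (K + (Real.log kk + K) * 0))) :=
      tendsto_const_nhds.mul (tendsto_const_nhds.add (tendsto_const_nhds.mul hinvT))
    rw [show ((d:ℝ) - 1) * K = ((d:ℝ) - 1) * (K + (Real.log kk + K) * 0) by ring]
    exact h4.congr (fun n => (h3 n).symm)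
  have hEbdd : Filter.IsBoundedUnder (· ≤ ·) Filter.atTop E :=
    (hBndT.isBoundedUnder_le).mono_le (Filter.Eventually.of_forall hEB)
  constructor
  · -- lower bound
    rw [hent]
    apply Filter.le_limsup_of_frequently_le _ hEbdd
    apply Filter.Eventually.frequently
    rw [Filter.eventually_atTop]
    refine ⟨l, fun n hn => ?_⟩
    have hx := hx1 n
    have h1 := hPlb n hn
    rw [hEn n, hdelta n, div_div_eq_mul_div]
    rw [le_div_iff₀ (by linarith)]
    nlinarith
  · -- upper bound
    rw [hent]
    have hco : Filter.IsCoboundedUnder (· ≤ ·) Filter.atTop E :=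
      Filter.IsBoundedUnder.isCoboundedUnder_le
        ⟨0, Filter.eventually_map.2 (Filter.Eventually.of_forall hE0)⟩
    calc Filter.limsup E Filter.atTop ≤ Filter.limsup Bnd Filter.atTop :=
        Filter.limsup_le_limsup (Filter.Eventually.of_forall hEB) hco hBndT.isBoundedUnder_le
      _ = ((d:ℝ) - 1) * K := hBndT.limsup_eq
      _ = ((d:ℝ) - 1) * V / (1 - ((d:ℝ)⁻¹)^L) := by rw [hK]; ring

/-- **Theorem 5.1 (first part).** For every finite positive integer sequence
`y₁,…,y_l`, the number `μ = (d−1)·max over cyclic shifts (w₁,…,w_l) of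
Σᵢ log wᵢ / dⁱ` is a limit of entropies of irreducible hom Markov tree-shifts;
in particular it lies in the closure of `H^{(d)}_irr`. -/
theorem mu_mem_closure_HsetIrr {d l : ℕ} (hd : 2 ≤ d) (hl : 1 ≤ l)
    (y : Fin l → ℕ) (hy : ∀ i, 1 ≤ y i) (μ : ℝ)
    (hμ : μ = ((d : ℝ) - 1) * Finset.univ.sup' ⟨⟨0, hl⟩, Finset.mem_univ _⟩
      (fun m : Fin l => ∑ i : Fin l, Real.log (y (m + i)) / (d : ℝ) ^ ((i : ℕ) + 1))) :
    μ ∈ closure (HsetIrr d) ∧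
    ∃ (k : ℕ → ℕ) (M : ∀ N, Matrix (Fin (k N)) (Fin (k N)) ℕ),
      (∀ N, 1 ≤ k N ∧ IsBinary (M N) ∧ MatIrreducible (M N)) ∧
      Filter.Tendsto (fun N => treeEntropy d (M N)) Filter.atTop (nhds μ) := by
  have hex : ∀ N : ℕ, ∃ k, 1 ≤ k ∧ ∃ M : Matrix (Fin k) (Fin k) ℕ,
      IsBinary M ∧ MatIrreducible M ∧
      ((d:ℝ) - 1) * Finset.univ.sup' ⟨⟨0, hl⟩, Finset.mem_univ _⟩ (MuAux.Vf d y)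
        ≤ treeEntropy d M ∧
      treeEntropy d M ≤ (((d:ℝ) - 1) *
          Finset.univ.sup' ⟨⟨0, hl⟩, Finset.mem_univ _⟩ (MuAux.Vf d y))
        / (1 - ((d:ℝ)⁻¹)^(l + N)) :=
    fun N => main_aux hd hl y hy (l + N) (by omega)
  choose k hk M hbin hirr hlo hhi using hex
  have hμ' : μ = ((d:ℝ) - 1) * Finset.univ.sup' ⟨⟨0, hl⟩, Finset.mem_univ _⟩ (MuAux.Vf d y) :=
    hμ
  have hd1 : (1:ℝ) < (d:ℝ) := by exact_mod_cast (by omega : 1 < d)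
  have hq0 : (0:ℝ) ≤ (d:ℝ)⁻¹ := by positivity
  have hq1 : (d:ℝ)⁻¹ < 1 := by rw [inv_lt_one_iff₀]; right; exact hd1
  set S : ℝ := ((d:ℝ) - 1) * Finset.univ.sup' ⟨⟨0, hl⟩, Finset.mem_univ _⟩ (MuAux.Vf d y)
    with hS
  have h0 : Filter.Tendsto (fun N : ℕ => ((d:ℝ)⁻¹)^(l+N)) Filter.atTop (nhds 0) := by
    have h := (tendsto_pow_atTop_nhds_zero_of_lt_one hq0 hq1).const_mul (((d:ℝ)⁻¹)^l)
    simpa [pow_add] using h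
  have h2 : Filter.Tendsto (fun N : ℕ => 1 - ((d:ℝ)⁻¹)^(l+N)) Filter.atTop (nhds 1) := by
    simpa using tendsto_const_nhds.sub h0
  have hT : Filter.Tendsto (fun N : ℕ => S / (1 - ((d:ℝ)⁻¹)^(l+N))) Filter.atTop (nhds μ) := by
    have h3 := (tendsto_const_nhds (x := S) (f := Filter.atTop (α := ℕ))).div h2 (by norm_num)
    rw [hμ']
    simpa [Pi.div_def] using h3
  have hTen : Filter.Tendsto (fun N => treeEntropy d (M N)) Filter.atTop (nhds μ) := by
    apply tendsto_of_tendsto_of_tendsto_of_le_of_le (g := fun _ : ℕ => μ) tendsto_const_nhds hT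
    · intro N
      rw [hμ']
      exact hlo N
    · intro N
      exact hhi N
  refine ⟨?_, k, M, fun N => ⟨hk N, hbin N, hirr N⟩, hTen⟩
  exact mem_closure_of_tendsto hTen (Filter.Eventually.of_forall
    (fun N => ⟨k N, hk N, M N, hbin N, hirr N, rfl⟩))
end

section
/- Fix d ≥ 2. The set H^{(d)}_irr = {h(T_M) : k ≥ 1 and M is an irreducible k×k matrix with entries in {0,1}} is dense in the interval [(d−1)·log 2, ∞); that is, every real number x ≥ (d−1)·log 2 lies in the closure of H^{(d)}_irr. -/
open Filter Real

open Topology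

namespace HsetIrrDense

section Word

variable {d N : ℕ} [NeZero N]

/-- The states: class `i` has `c i` identical states. -/
abbrev WSt (c : ZMod N → ℕ) : Type := (i : ZMod N) × Fin (c i)

/-- The cyclic word matrix: each state of class `i` points to all states of class `i+1`. -/
def Mw (c : ZMod N → ℕ) : Matrix (WSt c) (WSt c) ℕ :=
  fun u v => if v.1 = u.1 + 1 then 1 else 0

/-- The class block-count recursion. -/
def Pw (d : ℕ) (c : ZMod N → ℕ) : ℕ → ZMod N → ℕ
  | 0, _ => 1
  | n + 1, i => (c (i + 1) * Pw d c n (i + 1)) ^ d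

lemma Pw_pos (d : ℕ) (c : ZMod N → ℕ) (hc : ∀ i, 1 ≤ c i) (hd : 1 ≤ d) :
    ∀ n i, 1 ≤ Pw d c n i := by
  intro n
  induction n with
  | zero => intro i; simp [Pw]
  | succ n ih =>
    intro i
    have h1 := hc (i + 1)
    have h2 := ih (i + 1)
    have : 0 < c (i + 1) * Pw d c n (i + 1) := Nat.mul_pos h1 h2
    simpa [Pw] using Nat.one_le_pow _ _ this

lemma treeP_Mw (d : ℕ) (c : ZMod N → ℕ) :
    ∀ n (u : WSt c), treeP d (Mw c) n u = Pw d c n u.1 := by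
  intro n
  induction n with
  | zero => intro u; rfl
  | succ n ih =>
    intro u
    show (∑ v, Mw c u v * treeP d (Mw c) n v) ^ d = _
    have h1 : ∑ v : WSt c, Mw c u v * treeP d (Mw c) n v
        = c (u.1 + 1) * Pw d c n (u.1 + 1) := by
      rw [← Finset.univ_sigma_univ, Finset.sum_sigma]
      have h2 : ∀ i : ZMod N,
          (∑ b : Fin (c i), Mw c u ⟨i, b⟩ * treeP d (Mw c) n ⟨i, b⟩)
          = if i = u.1 + 1 then c i * Pw d c n i else 0 := by
        intro i
        have hterm : ∀ b : Fin (c i), Mw c u ⟨i, b⟩ * treeP d (Mw c) n ⟨i, b⟩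
            = if i = u.1 + 1 then Pw d c n i else 0 := by
          intro b
          rw [ih ⟨i, b⟩]
          simp only [Mw, ite_mul, one_mul, zero_mul]
        rw [Finset.sum_congr rfl fun b _ => hterm b, Finset.sum_const, Finset.card_univ,
          Fintype.card_fin, smul_eq_mul, mul_ite, mul_zero]
      rw [Finset.sum_congr rfl (fun i _ => h2 i)]
      simp
    rw [h1]
    rfl

lemma Mw_pow_pos (c : ZMod N → ℕ) (hc : ∀ i, 1 ≤ c i) :
    ∀ n : ℕ, 1 ≤ n → ∀ u v : WSt c, v.1 = u.1 + ((n : ℕ) : ZMod N) → 0 < (Mw c ^ n) u v := by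
  intro n
  induction n with
  | zero => omega
  | succ n ih =>
    intro _ u v hv
    rcases Nat.eq_zero_or_pos n with h0 | hpos
    · subst h0
      have h1 : v.1 = u.1 + 1 := by simpa using hv
      simp [pow_one, Mw, h1]
    · rw [pow_succ, Matrix.mul_apply]
      set w : WSt c := ⟨u.1 + ((n : ℕ) : ZMod N), ⟨0, hc _⟩⟩ with hw
      have h1 : 0 < (Mw c ^ n) u w := ih hpos u w rfl
      have h2 : Mw c w v = 1 := by
        have h3 : v.1 = w.1 + 1 := by
          rw [hv, hw]
          push_cast
          ring
        simp [Mw, h3]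
      have hterm : 0 < (Mw c ^ n) u w * Mw c w v := by
        rw [h2]; omega
      exact Finset.sum_pos' (fun i _ => Nat.zero_le _) ⟨w, Finset.mem_univ w, hterm⟩

lemma Mw_irr (c : ZMod N → ℕ) (hc : ∀ i, 1 ≤ c i) : MatIrreducible (Mw c) := by
  intro u v
  have hN : 1 ≤ N := Nat.pos_of_ne_zero (NeZero.ne N)
  refine ⟨(v.1 - u.1).val + N, by omega, ?_⟩
  apply Mw_pow_pos c hc _ (by omega)
  have : (((v.1 - u.1).val + N : ℕ) : ZMod N) = v.1 - u.1 := by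
    push_cast
    rw [ZMod.natCast_self, add_zero, ZMod.natCast_rightInverse]
  rw [this]; ring

end Word

section Transport

variable {d : ℕ}

lemma treeP_submatrix {ι κ : Type} [Fintype ι] [Fintype κ] (M : Matrix ι ι ℕ) (e : ι ≃ κ) :
    ∀ n (j : κ), treeP d (M.submatrix e.symm e.symm) n j = treeP d M n (e.symm j) := by
  intro n
  induction n with
  | zero => intro j; rfl
  | succ n ih =>
    intro j
    show (∑ q, M.submatrix e.symm e.symm j q * treeP d (M.submatrix e.symm e.symm) n q) ^ d
      = (∑ v, M (e.symm j) v * treeP d M n v) ^ d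
    congr 1
    rw [← Equiv.sum_comp e.symm (fun v => M (e.symm j) v * treeP d M n v)]
    exact Finset.sum_congr rfl fun q _ => by rw [ih q]; rfl

lemma treeEntropy_submatrix {ι κ : Type} [Fintype ι] [Fintype κ] (M : Matrix ι ι ℕ)
    (e : ι ≃ κ) : treeEntropy d (M.submatrix e.symm e.symm) = treeEntropy d M := by
  unfold treeEntropy
  congr 1
  funext n
  congr 2
  rw [← Equiv.sum_comp e.symm (fun v => (treeP d M n v : ℝ))]
  exact Finset.sum_congr rfl fun q _ => by rw [treeP_submatrix M e n q]

lemma pow_submatrix {ι κ : Type} [Fintype ι] [DecidableEq ι] [Fintype κ] [DecidableEq κ]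
    (M : Matrix ι ι ℕ) (e : ι ≃ κ) :
    ∀ n : ℕ, 1 ≤ n → (M.submatrix e.symm e.symm) ^ n = (M ^ n).submatrix e.symm e.symm := by
  intro n
  induction n with
  | zero => omega
  | succ n ih =>
    intro _
    rcases Nat.eq_zero_or_pos n with h0 | hpos
    · subst h0; simp
    · rw [pow_succ, ih hpos, pow_succ, ← Matrix.submatrix_mul_equiv (M ^ n) M _ e.symm _]

lemma matIrr_submatrix {ι κ : Type} [Fintype ι] [DecidableEq ι] [Fintype κ] [DecidableEq κ]
    (M : Matrix ι ι ℕ) (e : ι ≃ κ) (h : MatIrreducible M) :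
    MatIrreducible (M.submatrix e.symm e.symm) := by
  intro i j
  obtain ⟨n, hn, hpos⟩ := h (e.symm i) (e.symm j)
  exact ⟨n, hn, by rw [pow_submatrix M e n hn]; exact hpos⟩

end Transport

section Analysis

variable {N : ℕ} [NeZero N] {d : ℕ}

/-- Log of the word entry. -/
noncomputable def Lw (c : ZMod N → ℕ) (φ : ZMod N) : ℝ := Real.log (c φ)

/-- Partial weighted backward sums. -/
noncomputable def Rr (d : ℕ) (c : ZMod N → ℕ) (φ : ZMod N) (n : ℕ) : ℝ :=
  ∑ s ∈ Finset.range n, ((d : ℝ)⁻¹) ^ s * Lw c (φ - ((s : ℕ) : ZMod N))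

/-- Full weighted backward sum (periodic). -/
noncomputable def Sig (d : ℕ) (c : ZMod N → ℕ) (φ : ZMod N) : ℝ :=
  Rr d c φ N / (1 - ((d : ℝ)⁻¹) ^ N)

lemma one_sub_qpow_pos (hd : 2 ≤ d) : (0:ℝ) < 1 - ((d : ℝ)⁻¹) ^ N := by
  have h2 : (2:ℝ) ≤ d := by exact_mod_cast hd
  have h1 : (d:ℝ)⁻¹ < 1 := by
    rw [inv_lt_one₀ (by linarith)]; linarith
  have h0 : (0:ℝ) ≤ (d:ℝ)⁻¹ := by positivity
  have := pow_lt_one₀ h0 h1 (NeZero.ne N)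
  linarith

lemma Lw_nonneg (c : ZMod N → ℕ) (φ : ZMod N) : 0 ≤ Lw c φ :=
  Real.log_natCast_nonneg _

lemma Rr_nonneg (c : ZMod N → ℕ) (φ : ZMod N) (n : ℕ) : 0 ≤ Rr d c φ n :=
  Finset.sum_nonneg fun s _ => mul_nonneg (by positivity) (Lw_nonneg c _)

lemma Sig_nonneg (hd : 2 ≤ d) (c : ZMod N → ℕ) (φ : ZMod N) : 0 ≤ Sig d c φ :=
  div_nonneg (Rr_nonneg c φ N) (le_of_lt (one_sub_qpow_pos hd))

lemma Rr_cycle (hd : 2 ≤ d) (c : ZMod N → ℕ) (φ : ZMod N) :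
    Rr d c φ N = Lw c φ * (1 - ((d:ℝ)⁻¹) ^ N) + (d:ℝ)⁻¹ * Rr d c (φ - 1) N := by
  have hN : N ≠ 0 := NeZero.ne N
  obtain ⟨m, rfl⟩ : ∃ m, N = m + 1 := ⟨N - 1, by omega⟩
  have e1 : Rr d c φ (m+1) = Lw c φ + (d:ℝ)⁻¹ * Rr d c (φ - 1) m := by
    rw [Rr, Finset.sum_range_succ']
    have t0 : ((d:ℝ)⁻¹)^(0:ℕ) * Lw c (φ - ((0:ℕ) : ZMod (m+1))) = Lw c φ := by
      norm_num
    rw [t0]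
    have ts : ∀ s : ℕ, ((d:ℝ)⁻¹)^(s+1) * Lw c (φ - ((s+1 : ℕ) : ZMod (m+1)))
        = (d:ℝ)⁻¹ * (((d:ℝ)⁻¹)^s * Lw c ((φ - 1) - ((s:ℕ) : ZMod (m+1)))) := by
      intro s
      have hz : φ - ((s+1 : ℕ) : ZMod (m+1)) = (φ - 1) - ((s:ℕ) : ZMod (m+1)) := by
        push_cast; ring
      rw [hz, pow_succ']
      ring
    rw [Finset.sum_congr rfl fun s _ => ts s, ← Finset.mul_sum, Rr]
    ring
  have hwrap : (φ - 1) - ((m:ℕ) : ZMod (m+1)) = φ := by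
    have h1 : ((m:ℕ) : ZMod (m+1)) + 1 = 0 := by
      have := ZMod.natCast_self (m+1)
      push_cast at this
      linear_combination this
    rw [sub_sub, show (1 : ZMod (m+1)) + ((m:ℕ) : ZMod (m+1)) = 0 by rw [add_comm 1 ((m:ℕ) : ZMod (m+1))]; exact h1,
      sub_zero]
  have e2 : Rr d c (φ - 1) (m+1) = Rr d c (φ - 1) m + ((d:ℝ)⁻¹)^m * Lw c φ := by
    rw [Rr, Finset.sum_range_succ, hwrap, Rr]
  rw [e1, e2]
  ring

lemma Sig_rec (hd : 2 ≤ d) (c : ZMod N → ℕ) (φ : ZMod N) :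
    Sig d c φ = Lw c φ + (d:ℝ)⁻¹ * Sig d c (φ - 1) := by
  have hne : (1 - ((d:ℝ)⁻¹) ^ N) ≠ 0 := ne_of_gt (one_sub_qpow_pos hd)
  rw [Sig, Rr_cycle hd c φ, add_div, mul_div_cancel_right₀ _ hne, mul_div_assoc, Sig]

lemma Sig_split (hd : 2 ≤ d) (c : ZMod N → ℕ) (φ : ZMod N) :
    ∀ n : ℕ, Sig d c φ = Rr d c φ n + ((d:ℝ)⁻¹)^n * Sig d c (φ - ((n:ℕ) : ZMod N)) := by
  intro n
  induction n with
  | zero => simp [Rr]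
  | succ n ih =>
    rw [ih, Sig_rec hd c (φ - ((n:ℕ) : ZMod N))]
    have hz : φ - ((n:ℕ) : ZMod N) - 1 = φ - ((n+1 : ℕ) : ZMod N) := by
      push_cast; ring
    rw [hz]
    have hsum : Rr d c φ (n+1) = Rr d c φ n + ((d:ℝ)⁻¹)^n * Lw c (φ - ((n:ℕ) : ZMod N)) := by
      rw [Rr, Finset.sum_range_succ, Rr]
    rw [hsum]
    ring

lemma Rr_le_Sig (hd : 2 ≤ d) (c : ZMod N → ℕ) (φ : ZMod N) (n : ℕ) :
    Rr d c φ n ≤ Sig d c φ := by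
  have h1 := Sig_split hd c φ n
  have h2 : 0 ≤ ((d:ℝ)⁻¹)^n * Sig d c (φ - ((n:ℕ) : ZMod N)) :=
    mul_nonneg (by positivity) (Sig_nonneg hd c _)
  linarith

lemma Sig_le_Rr (hd : 2 ≤ d) (c : ZMod N → ℕ)
    (hmax : ∀ φ, Sig d c φ ≤ Sig d c 0) (φ : ZMod N) (n : ℕ) :
    Sig d c φ - ((d:ℝ)⁻¹)^n * Sig d c 0 ≤ Rr d c φ n := by
  have h1 := Sig_split hd c φ n
  have h2 : ((d:ℝ)⁻¹)^n * Sig d c (φ - ((n:ℕ) : ZMod N)) ≤ ((d:ℝ)⁻¹)^n * Sig d c 0 :=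
    mul_le_mul_of_nonneg_left (hmax _) (by positivity)
  linarith

lemma log_Pw (hd : 2 ≤ d) (c : ZMod N → ℕ) (hc : ∀ i, 1 ≤ c i) :
    ∀ (n : ℕ) (i : ZMod N),
      Real.log (Pw d c n i) = (d:ℝ)^n * Rr d c (i + ((n:ℕ) : ZMod N)) n := by
  intro n
  induction n with
  | zero => intro i; simp [Pw, Rr]
  | succ n ih =>
    intro i
    have hd0 : (0:ℝ) < d := by
      have : (2:ℝ) ≤ d := by exact_mod_cast hd
      linarith
    have hc1 : ((c (i+1) : ℕ) : ℝ) ≠ 0 := by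
      have := hc (i+1); positivity
    have hp1 : ((Pw d c n (i+1) : ℕ) : ℝ) ≠ 0 := by
      have := Pw_pos d c hc (by omega) n (i+1); positivity
    have lhs : Real.log (Pw d c (n+1) i)
        = (d:ℝ) * (Lw c (i+1) + Real.log (Pw d c n (i+1))) := by
      show Real.log (((c (i + 1) * Pw d c n (i + 1)) ^ d : ℕ) : ℝ) = _
      push_cast
      rw [Real.log_pow, Real.log_mul hc1 hp1, Lw]
    rw [lhs, ih (i+1)]
    have hφ : i + ((n+1 : ℕ) : ZMod N) = (i+1) + ((n:ℕ) : ZMod N) := by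
      push_cast; ring
    have hsum : Rr d c (i + ((n+1:ℕ) : ZMod N)) (n+1)
        = Rr d c ((i+1) + ((n:ℕ) : ZMod N)) n + ((d:ℝ)⁻¹)^n * Lw c (i+1) := by
      rw [hφ, Rr, Finset.sum_range_succ, Rr]
      congr 2
      rw [add_sub_cancel_right]
    rw [hsum]
    have hdd : (d:ℝ)^(n+1) * ((d:ℝ)⁻¹)^n = d := by
      rw [pow_succ]
      rw [show (d:ℝ)^n * (d:ℝ) * ((d:ℝ)⁻¹)^n = ((d:ℝ) * (d:ℝ)⁻¹)^n * d by ring,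
        mul_inv_cancel₀ (ne_of_gt hd0), one_pow, one_mul]
    linear_combination (-(Lw c (i+1))) * hdd

end Analysis

section Entropy

variable {N : ℕ} [NeZero N] {d : ℕ}

theorem treeEntropy_Mw (hd : 2 ≤ d) (c : ZMod N → ℕ) (hc : ∀ i, 1 ≤ c i)
    (hmax : ∀ φ, Sig d c φ ≤ Sig d c 0) :
    treeEntropy d (Mw c) = ((d:ℝ) - 1) / d * Sig d c 0 := by
  have hd2 : (2:ℝ) ≤ (d:ℝ) := by exact_mod_cast hd
  have hd0 : (0:ℝ) < d := by linarith
  set A := Sig d c 0 with hAdef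
  have hA : 0 ≤ A := Sig_nonneg hd c 0
  have hne : Nonempty (WSt c) := ⟨⟨0, ⟨0, hc 0⟩⟩⟩
  have hk : 0 < Fintype.card (WSt c) := Fintype.card_pos
  set k := Fintype.card (WSt c) with hkdef
  have hlogk : 0 ≤ Real.log k := Real.log_natCast_nonneg k
  have hlogub : ∀ (n : ℕ) (i : ZMod N), Real.log (Pw d c n i) ≤ (d:ℝ)^n * A := by
    intro n i
    rw [log_Pw hd c hc n i]
    apply mul_le_mul_of_nonneg_left _ (by positivity)
    exact le_trans (Rr_le_Sig hd c _ n) (hmax _)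
  have hloglb : ∀ n : ℕ,
      (d:ℝ)^n * A - A ≤ Real.log (Pw d c n ((0:ZMod N) - ((n:ℕ) : ZMod N))) := by
    intro n
    rw [log_Pw hd c hc n _]
    have h0 : ((0:ZMod N) - ((n:ℕ) : ZMod N)) + ((n:ℕ) : ZMod N) = 0 := by ring
    rw [h0]
    have h1 : A - ((d:ℝ)⁻¹)^n * A ≤ Rr d c 0 n := Sig_le_Rr hd c hmax 0 n
    have h2 : (d:ℝ)^n * (A - ((d:ℝ)⁻¹)^n * A) ≤ (d:ℝ)^n * Rr d c 0 n :=
      mul_le_mul_of_nonneg_left h1 (by positivity)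
    have h3 : (d:ℝ)^n * ((d:ℝ)⁻¹)^n = 1 := by
      rw [← mul_pow, mul_inv_cancel₀ (ne_of_gt hd0), one_pow]
    nlinarith [h2, h3]
  have hPw_pos : ∀ (n : ℕ) (i : ZMod N), (0:ℝ) < ((Pw d c n i : ℕ) : ℝ) := by
    intro n i
    exact_mod_cast Pw_pos d c hc (by omega) n i
  have hT : ∀ n : ℕ, (∑ u : WSt c, ((treeP d (Mw c) n u : ℕ) : ℝ))
      = ∑ u : WSt c, ((Pw d c n u.1 : ℕ) : ℝ) := by
    intro n
    exact Finset.sum_congr rfl fun u _ => by rw [treeP_Mw]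
  have hlb : ∀ n : ℕ, Real.exp ((d:ℝ)^n * A - A)
      ≤ ∑ u : WSt c, ((Pw d c n u.1 : ℕ) : ℝ) := by
    intro n
    set u0 : WSt c := ⟨(0:ZMod N) - ((n:ℕ) : ZMod N), ⟨0, hc _⟩⟩ with hu0
    have h1 : Real.exp ((d:ℝ)^n * A - A) ≤ ((Pw d c n u0.1 : ℕ) : ℝ) := by
      rw [← Real.exp_log (hPw_pos n u0.1)]
      exact Real.exp_le_exp.mpr (hloglb n)
    refine le_trans h1 ?_
    exact Finset.single_le_sum (f := fun u : WSt c => ((Pw d c n u.1 : ℕ) : ℝ))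
      (fun u _ => le_of_lt (hPw_pos n u.1)) (Finset.mem_univ u0)
  have hub : ∀ n : ℕ, (∑ u : WSt c, ((Pw d c n u.1 : ℕ) : ℝ))
      ≤ k * Real.exp ((d:ℝ)^n * A) := by
    intro n
    have h1 : ∀ u : WSt c, ((Pw d c n u.1 : ℕ) : ℝ) ≤ Real.exp ((d:ℝ)^n * A) := by
      intro u
      rw [← Real.exp_log (hPw_pos n u.1)]
      exact Real.exp_le_exp.mpr (hlogub n u.1)
    calc (∑ u : WSt c, ((Pw d c n u.1 : ℕ) : ℝ))
        ≤ ∑ _u : WSt c, Real.exp ((d:ℝ)^n * A) := Finset.sum_le_sum fun u _ => h1 u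
      _ = k * Real.exp ((d:ℝ)^n * A) := by
          rw [Finset.sum_const, Finset.card_univ, nsmul_eq_mul]
  have hlogT_ub : ∀ n : ℕ,
      Real.log (∑ u : WSt c, ((treeP d (Mw c) n u : ℕ) : ℝ))
        ≤ (d:ℝ)^n * A + Real.log k := by
    intro n
    rw [hT n]
    have h2 : (0:ℝ) < ∑ u : WSt c, ((Pw d c n u.1 : ℕ) : ℝ) :=
      lt_of_lt_of_le (Real.exp_pos _) (hlb n)
    calc Real.log (∑ u : WSt c, ((Pw d c n u.1 : ℕ) : ℝ))
        ≤ Real.log (k * Real.exp ((d:ℝ)^n * A)) := Real.log_le_log h2 (hub n)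
      _ = Real.log k + ((d:ℝ)^n * A) := by
          rw [Real.log_mul (by positivity) (ne_of_gt (Real.exp_pos _)), Real.log_exp]
      _ = (d:ℝ)^n * A + Real.log k := by ring
  have hlogT_lb : ∀ n : ℕ,
      (d:ℝ)^n * A - A ≤ Real.log (∑ u : WSt c, ((treeP d (Mw c) n u : ℕ) : ℝ)) := by
    intro n
    rw [hT n]
    calc (d:ℝ)^n * A - A = Real.log (Real.exp ((d:ℝ)^n * A - A)) := (Real.log_exp _).symm
      _ ≤ _ := Real.log_le_log (Real.exp_pos _) (hlb n)
  have hΔcast : ∀ n : ℕ, ((deltaCard d n : ℕ) : ℝ) = ∑ i ∈ Finset.range (n+1), (d:ℝ)^i := by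
    intro n
    unfold deltaCard
    push_cast
    rfl
  have hΔmul : ∀ n : ℕ, ((deltaCard d n : ℕ) : ℝ) * ((d:ℝ) - 1) = (d:ℝ)^(n+1) - 1 := by
    intro n
    rw [hΔcast n]
    exact geom_sum_mul (d:ℝ) (n+1)
  have hΔge : ∀ n : ℕ, (n:ℝ) + 1 ≤ ((deltaCard d n : ℕ) : ℝ) := by
    intro n
    have h1 : n + 1 ≤ deltaCard d n := by
      unfold deltaCard
      calc n + 1 = ∑ _i ∈ Finset.range (n+1), 1 := by simp
        _ ≤ _ := Finset.sum_le_sum fun i _ => Nat.one_le_pow _ _ (by omega)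
    exact_mod_cast h1
  have hΔpos : ∀ n : ℕ, (0:ℝ) < ((deltaCard d n : ℕ) : ℝ) := by
    intro n
    have h1 := hΔge n
    have h2 : (0:ℝ) < (n:ℝ) + 1 := by positivity
    linarith
  set tgt := ((d:ℝ) - 1) / d * A with htgt
  set C := 2 * A + Real.log k with hC
  have hC0 : 0 ≤ C := by positivity
  have hfb : ∀ n : ℕ,
      tgt - C * (1/((n:ℝ)+1)) ≤ Real.log (∑ u : WSt c, ((treeP d (Mw c) n u : ℕ) : ℝ))
        / ((deltaCard d n : ℕ) : ℝ) ∧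
      Real.log (∑ u : WSt c, ((treeP d (Mw c) n u : ℕ) : ℝ)) / ((deltaCard d n : ℕ) : ℝ)
        ≤ tgt + C * (1/((n:ℝ)+1)) := by
    intro n
    set Δ := ((deltaCard d n : ℕ) : ℝ) with hΔ
    have hΔp : 0 < Δ := hΔpos n
    have hΔg : (n:ℝ) + 1 ≤ Δ := hΔge n
    have hm := hΔmul n
    have hkey : tgt * Δ = (d:ℝ)^n * A - A / d := by
      rw [htgt]
      field_simp
      linear_combination A * hm
    have e2 : C ≤ C * Δ / ((n:ℝ)+1) := by
      rw [le_div_iff₀ (by positivity)]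
      nlinarith [hΔg, hC0]
    have e3 : A/d ≤ A := by
      rw [div_le_iff₀ hd0]
      nlinarith [hA, hd2]
    have e5 : 0 ≤ A/d := by positivity
    constructor
    · rw [le_div_iff₀ hΔp]
      have e4 := hlogT_lb n
      have e6 : (tgt - C * (1/((n:ℝ)+1))) * Δ = tgt * Δ - C * Δ / ((n:ℝ)+1) := by ring
      rw [e6, hkey]
      linarith
    · rw [div_le_iff₀ hΔp]
      have e4 := hlogT_ub n
      have e6 : (tgt + C * (1/((n:ℝ)+1))) * Δ = tgt * Δ + C * Δ / ((n:ℝ)+1) := by ring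
      rw [e6, hkey]
      linarith
  have hlim0 : Tendsto (fun n : ℕ => C * (1/((n:ℝ)+1))) atTop (𝓝 0) := by
    have h0 := tendsto_one_div_add_atTop_nhds_zero_nat (𝕜 := ℝ)
    simpa using h0.const_mul C
  have hten : Tendsto (fun n : ℕ =>
      Real.log (∑ u : WSt c, ((treeP d (Mw c) n u : ℕ) : ℝ)) / ((deltaCard d n : ℕ) : ℝ))
      atTop (𝓝 tgt) := by
    apply tendsto_of_tendsto_of_tendsto_of_le_of_le
      (g := fun n : ℕ => tgt - C * (1/((n:ℝ)+1)))
      (h := fun n : ℕ => tgt + C * (1/((n:ℝ)+1)))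
    · simpa using tendsto_const_nhds.sub hlim0
    · simpa using tendsto_const_nhds.add hlim0
    · exact fun n => (hfb n).1
    · exact fun n => (hfb n).2
  unfold treeEntropy
  exact hten.limsup_eq

end Entropy

section Member

theorem mem_HsetIrr {d N : ℕ} [NeZero N] (hd : 2 ≤ d) (c : ZMod N → ℕ) (hc : ∀ i, 1 ≤ c i)
    (hmax : ∀ φ, Sig d c φ ≤ Sig d c 0) :
    ((d:ℝ) - 1) / d * Sig d c 0 ∈ HsetIrr d := by
  have hne : Nonempty (WSt c) := ⟨⟨0, ⟨0, hc 0⟩⟩⟩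
  have hk1 : 1 ≤ Fintype.card (WSt c) := Fintype.card_pos
  set e : WSt c ≃ Fin (Fintype.card (WSt c)) := Fintype.equivFin (WSt c) with he
  refine ⟨Fintype.card (WSt c), hk1, (Mw c).submatrix e.symm e.symm, ?_, ?_, ?_⟩
  · intro i j
    show Mw c (e.symm i) (e.symm j) ≤ 1
    unfold Mw
    split <;> omega
  · exact matIrr_submatrix (Mw c) e (Mw_irr c hc)
  · rw [treeEntropy_submatrix (Mw c) e, treeEntropy_Mw hd c hc hmax]

end Member

section Main

set_option maxHeartbeats 2000000 in
theorem HsetIrr_dense_ge' (d : ℕ) (hd : 2 ≤ d) :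
    ∀ x : ℝ, ((d : ℝ) - 1) * Real.log 2 ≤ x → x ∈ closure (HsetIrr d) := by
  intro x hx
  rw [Metric.mem_closure_iff]
  intro ε hε
  have hd2 : (2:ℝ) ≤ (d:ℝ) := by exact_mod_cast hd
  have hd1 : (0:ℝ) < (d:ℝ) - 1 := by linarith
  have hd0 : (0:ℝ) < (d:ℝ) := by linarith
  have hlog2 : (0:ℝ) < Real.log 2 := Real.log_pos (by norm_num)
  set V := (d:ℝ)/((d:ℝ)-1) * x with hVdef
  have hxV : ((d:ℝ)-1)/(d:ℝ) * V = x := by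
    rw [hVdef]
    field_simp
  have hVd : (d:ℝ) * Real.log 2 ≤ V := by
    rw [hVdef, div_mul_eq_mul_div, le_div_iff₀ hd1]
    nlinarith [hx]
  have hV0 : (0:ℝ) < V := lt_of_lt_of_le (by positivity) hVd
  -- the head letter
  set M₀ := ⌊Real.exp V⌋₊ with hM₀def
  have hexpV : (4:ℝ) ≤ Real.exp V := by
    have h1 : (2:ℝ)^(d:ℕ) = Real.exp ((d:ℕ) * Real.log 2) := by
      rw [Real.exp_nat_mul, Real.exp_log (by norm_num)]
    have h2 : (4:ℝ) = 2^(2:ℕ) := by norm_num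
    calc (4:ℝ) = 2^(2:ℕ) := h2
      _ ≤ 2^(d:ℕ) := pow_le_pow_right₀ (by norm_num) hd
      _ = Real.exp ((d:ℕ) * Real.log 2) := h1
      _ ≤ Real.exp V := Real.exp_le_exp.mpr hVd
  have hM₀4 : 4 ≤ M₀ := Nat.le_floor (by exact_mod_cast hexpV)
  have hM₀pos : (0:ℝ) < (M₀:ℝ) := by
    have : (0:ℕ) < M₀ := by omega
    exact_mod_cast this
  have hM₀le : (M₀:ℝ) ≤ Real.exp V := Nat.floor_le (le_of_lt (Real.exp_pos V))
  have hlogM₀ : Real.log M₀ ≤ V := by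
    calc Real.log M₀ ≤ Real.log (Real.exp V) := Real.log_le_log hM₀pos hM₀le
      _ = V := Real.log_exp V
  have hM₀gt : Real.exp V < 2 * (M₀:ℝ) := by
    have h1 : Real.exp V - 1 < (M₀:ℝ) := Nat.sub_one_lt_floor _
    have h2 : (1:ℝ) ≤ (M₀:ℝ) := by
      have : (1:ℕ) ≤ M₀ := by omega
      exact_mod_cast this
    linarith
  -- eta
  set η := (V - Real.log M₀) / Real.log 2 with hηdef
  have hη0 : 0 ≤ η := div_nonneg (by linarith) (le_of_lt hlog2)
  have hη1 : η < 1 := by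
    rw [hηdef, div_lt_one hlog2]
    have h1 : V < Real.log (2 * (M₀:ℝ)) := by
      calc V = Real.log (Real.exp V) := (Real.log_exp V).symm
        _ < Real.log (2 * (M₀:ℝ)) := Real.log_lt_log (Real.exp_pos V) hM₀gt
    rw [Real.log_mul (by norm_num) (ne_of_gt hM₀pos)] at h1
    linarith
  have hVeq : V = Real.log M₀ + η * Real.log 2 := by
    rw [hηdef]
    field_simp
    ring
  -- digits of eta in base d
  set flo : ℕ → ℕ := fun s => ⌊(d:ℝ)^s * η⌋₊ with hflodef
  have hflo0 : flo 0 = 0 := by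
    rw [hflodef]
    simp only [pow_zero, one_mul]
    rw [Nat.floor_eq_zero]
    exact hη1
  have hfloD : ∀ s, d * flo s ≤ flo (s+1) := by
    intro s
    apply Nat.le_floor
    push_cast
    calc ((d:ℕ):ℝ) * (flo s : ℝ) ≤ (d:ℝ) * ((d:ℝ)^s * η) :=
        mul_le_mul_of_nonneg_left (Nat.floor_le (by positivity)) (le_of_lt hd0)
      _ = (d:ℝ)^(s+1) * η := by ring
  have hfloU : ∀ s, flo (s+1) < d * flo s + d := by
    intro s
    have h2 : (d:ℝ)^s * η < (flo s : ℝ) + 1 := Nat.lt_floor_add_one _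
    have h1 : (d:ℝ)^(s+1) * η < ((d * flo s + d : ℕ) : ℝ) := by
      push_cast
      calc (d:ℝ)^(s+1) * η = (d:ℝ) * ((d:ℝ)^s * η) := by ring
        _ < (d:ℝ) * ((flo s : ℝ) + 1) := by
            exact mul_lt_mul_of_pos_left h2 hd0
        _ = (d:ℝ) * (flo s : ℝ) + (d:ℝ) := by ring
    exact (Nat.floor_lt (by positivity)).mpr h1
  set dig : ℕ → ℕ := fun s => flo s - d * flo (s-1) with hdigdef
  have hdig_le : ∀ s, dig (s+1) ≤ d - 1 := by
    intro s
    have h1 := hfloD s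
    have h2 := hfloU s
    rw [hdigdef]
    simp only [Nat.add_sub_cancel]
    omega
  have hdig_cast : ∀ s, ((dig (s+1) : ℕ) : ℝ) = (flo (s+1) : ℝ) - (d:ℝ) * (flo s : ℝ) := by
    intro s
    rw [hdigdef]
    simp only [Nat.add_sub_cancel]
    have h1 := hfloD s
    push_cast [Nat.cast_sub h1]
    ring
  have hdigsum : ∀ m : ℕ,
      ∑ s ∈ Finset.range m, ((d:ℝ)⁻¹)^(s+1) * ((dig (s+1) : ℕ) : ℝ)
        = (flo m : ℝ) / (d:ℝ)^m := by
    intro m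
    induction m with
    | zero => simp [hflo0]
    | succ m ih =>
      rw [Finset.sum_range_succ, ih, hdig_cast m]
      have hdm : (d:ℝ)^m ≠ 0 := by positivity
      have hdm1 : (d:ℝ)^(m+1) ≠ 0 := by positivity
      rw [inv_pow]
      field_simp
      ring
  -- choose the length
  have hdinv1 : (d:ℝ)⁻¹ < 1 := by
    rw [inv_lt_one₀ (by linarith)]
    linarith
  have hdinv0 : (0:ℝ) ≤ (d:ℝ)⁻¹ := by positivity
  obtain ⟨m, hm⟩ : ∃ m : ℕ, ((d:ℝ)⁻¹)^(m+1) * (2*V) < ε := by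
    obtain ⟨n₀, hn₀⟩ := exists_pow_lt_of_lt_one (show (0:ℝ) < ε/(2*V) by positivity) hdinv1
    refine ⟨n₀, ?_⟩
    have h1 : ((d:ℝ)⁻¹)^(n₀+1) ≤ ((d:ℝ)⁻¹)^n₀ := pow_le_pow_of_le_one hdinv0 (le_of_lt hdinv1) (by omega)
    have h2 : ((d:ℝ)⁻¹)^(n₀+1) < ε/(2*V) := lt_of_le_of_lt h1 hn₀
    rw [div_lt_iff₀ (by positivity)] at *
    calc ((d:ℝ)⁻¹)^(n₀+1) * (2*V) < ε/(2*V) * (2*V) := by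
          apply mul_lt_mul_of_pos_right h2 (by positivity)
      _ = ε := by field_simp
  haveI : NeZero (m+1) := ⟨Nat.succ_ne_zero m⟩
  -- the word
  set c : ZMod (m+1) → ℕ := fun φ => if φ = 0 then M₀ else 2^(dig ((m+1) - φ.val)) with hcdef
  have hc1 : ∀ i, 1 ≤ c i := by
    intro i
    by_cases h : i = 0
    · have : c i = M₀ := by rw [hcdef]; simp [h]
      omega
    · have : c i = 2^(dig ((m+1) - i.val)) := by rw [hcdef]; simp [h]
      rw [this]
      exact Nat.one_le_two_pow
  have hL0 : Lw c 0 = Real.log M₀ := by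
    rw [Lw, hcdef]
    simp
  have hLbound : ∀ φ : ZMod (m+1), φ ≠ 0 → Lw c φ ≤ ((d:ℝ) - 1) * Real.log 2 := by
    intro φ hφ
    have hval : φ.val ≠ 0 := by
      intro h
      apply hφ
      have := ZMod.natCast_rightInverse (n := m+1) φ
      rw [← this, h]
      simp
    have hvlt : φ.val < m + 1 := ZMod.val_lt φ
    have hj : ∃ j, (m+1) - φ.val = j + 1 := ⟨(m+1) - φ.val - 1, by omega⟩
    obtain ⟨j, hjeq⟩ := hj
    have hcφ : c φ = 2^(dig (j+1)) := by
      rw [hcdef]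
      simp only [if_neg hφ, hjeq]
    rw [Lw, hcφ]
    push_cast
    rw [Real.log_pow]
    have h1 : (dig (j+1) : ℝ) ≤ (d:ℝ) - 1 := by
      have h2 := hdig_le j
      have h3 : ((dig (j+1) : ℕ) : ℝ) ≤ ((d - 1 : ℕ) : ℝ) := by exact_mod_cast h2
      have h4 : ((d - 1 : ℕ) : ℝ) = (d:ℝ) - 1 := by
        have : (1:ℕ) ≤ d := by omega
        push_cast [Nat.cast_sub this]
        ring
      linarith
    nlinarith [hlog2, h1]
  -- value of the period sum at phase 0
  have hQ0 : Rr d c 0 (m+1) = Real.log M₀ + Real.log 2 * ((flo m : ℝ) / (d:ℝ)^m) := by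
    rw [Rr, Finset.sum_range_succ']
    have t0 : ((d:ℝ)⁻¹)^(0:ℕ) * Lw c ((0:ZMod (m+1)) - ((0:ℕ) : ZMod (m+1))) = Real.log M₀ := by
      norm_num
      exact hL0
    rw [t0]
    have ts : ∀ s ∈ Finset.range m, ((d:ℝ)⁻¹)^(s+1) * Lw c ((0:ZMod (m+1)) - ((s+1 : ℕ) : ZMod (m+1)))
        = ((d:ℝ)⁻¹)^(s+1) * (((dig (s+1) : ℕ) : ℝ) * Real.log 2) := by
      intro s hs
      have hsm : s < m := Finset.mem_range.mp hs
      congr 1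
      -- identify the letter
      have hcast : (0:ZMod (m+1)) - ((s+1 : ℕ) : ZMod (m+1)) = (((m - s : ℕ) : ZMod (m+1))) := by
        have h1 : ((m + 1 : ℕ) : ZMod (m+1)) = 0 := by
          exact_mod_cast ZMod.natCast_self (m+1)
        have h2 : (m - s : ℕ) + (s + 1) = m + 1 := by omega
        have h3 : (((m - s : ℕ) : ZMod (m+1))) + ((s+1 : ℕ) : ZMod (m+1)) = 0 := by
          rw [← Nat.cast_add, h2, h1]
        linear_combination -h3
      rw [hcast]
      have hval : (((m - s : ℕ) : ZMod (m+1))).val = m - s := ZMod.val_cast_of_lt (by omega)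
      have hne0 : (((m - s : ℕ) : ZMod (m+1))) ≠ 0 := by
        intro h
        rw [h] at hval
        simp [ZMod.val_zero] at hval
        omega
      have hcval : c (((m - s : ℕ) : ZMod (m+1))) = 2^(dig (s+1)) := by
        rw [hcdef]
        simp only [if_neg hne0, hval]
        congr 2
        omega
      rw [Lw, hcval]
      push_cast
      rw [Real.log_pow]
    rw [Finset.sum_congr rfl ts]
    have : ∑ s ∈ Finset.range m, ((d:ℝ)⁻¹)^(s+1) * (((dig (s+1) : ℕ) : ℝ) * Real.log 2)
        = Real.log 2 * ∑ s ∈ Finset.range m, ((d:ℝ)⁻¹)^(s+1) * ((dig (s+1) : ℕ) : ℝ) := by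
      rw [Finset.mul_sum]
      exact Finset.sum_congr rfl fun s _ => by ring
    rw [this, hdigsum m]
    ring
  -- bounds on Sig 0
  have hfloup : (flo m : ℝ) / (d:ℝ)^m ≤ η := by
    rw [div_le_iff₀ (by positivity)]
    calc (flo m : ℝ) ≤ (d:ℝ)^m * η := Nat.floor_le (by positivity)
      _ = η * (d:ℝ)^m := by ring
  have hflodn : η - ((d:ℝ)⁻¹)^m ≤ (flo m : ℝ) / (d:ℝ)^m := by
    have h1 : (d:ℝ)^m * η - 1 < (flo m : ℝ) := Nat.sub_one_lt_floor _
    rw [le_div_iff₀ (by positivity : (0:ℝ) < (d:ℝ)^m)]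
    have h2 : ((d:ℝ)⁻¹)^m * (d:ℝ)^m = 1 := by
      rw [← mul_pow, inv_mul_cancel₀ (ne_of_gt hd0), one_pow]
    nlinarith [h1, h2]
  have hqpos : (0:ℝ) < 1 - ((d:ℝ)⁻¹)^(m+1) := one_sub_qpow_pos hd
  have hqhalf : ((d:ℝ)⁻¹)^(m+1) ≤ 1/2 := by
    have h1 : (d:ℝ)⁻¹ ≤ 1/2 := by
      rw [inv_eq_one_div]
      exact one_div_le_one_div_of_le (by norm_num) hd2
    calc ((d:ℝ)⁻¹)^(m+1) ≤ (1/2:ℝ)^(m+1) := pow_le_pow_left₀ hdinv0 h1 _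
      _ ≤ (1/2:ℝ)^1 := pow_le_pow_of_le_one (by norm_num) (by norm_num) (by omega)
      _ = 1/2 := by norm_num
  have hQ0_le : Rr d c 0 (m+1) ≤ V := by
    rw [hQ0, hVeq]
    have h1 : Real.log 2 * ((flo m : ℝ)/(d:ℝ)^m) ≤ Real.log 2 * η :=
      mul_le_mul_of_nonneg_left hfloup (le_of_lt hlog2)
    linarith
  have hQ0_ge : V - Real.log 2 * ((d:ℝ)⁻¹)^m ≤ Rr d c 0 (m+1) := by
    rw [hQ0, hVeq]
    have h1 : Real.log 2 * (η - ((d:ℝ)⁻¹)^m) ≤ Real.log 2 * ((flo m : ℝ)/(d:ℝ)^m) :=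
      mul_le_mul_of_nonneg_left hflodn (le_of_lt hlog2)
    nlinarith [h1]
  have hinvd : (d:ℝ)⁻¹ * (d:ℝ) = 1 := inv_mul_cancel₀ (ne_of_gt hd0)
  have hSig0_ge_V : V ≤ Sig d c 0 := by
    rw [Sig, le_div_iff₀ hqpos]
    have hVq : Real.log 2 * ((d:ℝ)⁻¹)^m ≤ V * ((d:ℝ)⁻¹)^(m+1) := by
      have e : ((d:ℝ)⁻¹)^(m+1) = ((d:ℝ)⁻¹)^m * (d:ℝ)⁻¹ := pow_succ _ _
      rw [e]
      have h1 : Real.log 2 ≤ V * (d:ℝ)⁻¹ := by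
        have h2 := mul_le_mul_of_nonneg_left hVd hdinv0
        rw [show (d:ℝ)⁻¹ * ((d:ℝ) * Real.log 2) = ((d:ℝ)⁻¹ * (d:ℝ)) * Real.log 2 by ring,
          hinvd, one_mul] at h2
        linarith [h2]
      nlinarith [pow_nonneg hdinv0 m, h1]
    nlinarith [hQ0_ge, hVq]
  have hSig0_le : Sig d c 0 ≤ V + 2*V*((d:ℝ)⁻¹)^(m+1) := by
    rw [Sig, div_le_iff₀ hqpos]
    have hq0 : (0:ℝ) ≤ ((d:ℝ)⁻¹)^(m+1) := pow_nonneg hdinv0 _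
    have h1 : (0:ℝ) ≤ V * (((d:ℝ)⁻¹)^(m+1) * (1 - 2*((d:ℝ)⁻¹)^(m+1))) :=
      mul_nonneg (le_of_lt hV0) (mul_nonneg hq0 (by linarith))
    nlinarith [hQ0_le, h1]
  have hS0d : (d:ℝ) * Real.log 2 ≤ Sig d c 0 := le_trans hVd hSig0_ge_V
  have hmax : ∀ φ, Sig d c φ ≤ Sig d c 0 := by
    have key : Sig d c 0 - (d:ℝ)⁻¹ * Sig d c 0 = ((d:ℝ)-1) * ((d:ℝ)⁻¹ * Sig d c 0) := by
      linear_combination (-(Sig d c 0)) * hinvd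
    have h8 : Real.log 2 ≤ (d:ℝ)⁻¹ * Sig d c 0 := by
      have h2 := mul_le_mul_of_nonneg_left hS0d hdinv0
      rw [show (d:ℝ)⁻¹ * ((d:ℝ) * Real.log 2) = ((d:ℝ)⁻¹ * (d:ℝ)) * Real.log 2 by ring,
        hinvd, one_mul] at h2
      exact h2
    have h9 : ((d:ℝ)-1) * Real.log 2 ≤ ((d:ℝ)-1) * ((d:ℝ)⁻¹ * Sig d c 0) :=
      mul_le_mul_of_nonneg_left h8 (by linarith)
    have h5 : ((d:ℝ)-1) * Real.log 2 + (d:ℝ)⁻¹ * Sig d c 0 ≤ Sig d c 0 := by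
      linarith [key, h9]
    have hstep : ∀ t : ℕ, t < m+1 → Sig d c ((t : ℕ) : ZMod (m+1)) ≤ Sig d c 0 := by
      intro t
      induction t with
      | zero => intro _; simp
      | succ t ih =>
        intro ht
        have hrec := Sig_rec hd c (((t+1 : ℕ)) : ZMod (m+1))
        have hz : (((t+1 : ℕ)) : ZMod (m+1)) - 1 = ((t : ℕ) : ZMod (m+1)) := by
          push_cast
          ring
        rw [hz] at hrec
        rw [hrec]
        have hne0 : (((t+1 : ℕ)) : ZMod (m+1)) ≠ 0 := by
          intro h
          have hval := ZMod.val_cast_of_lt (show t+1 < m+1 by omega)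
          rw [h] at hval
          simp [ZMod.val_zero] at hval
        have h2 := hLbound _ hne0
        have h3 := ih (by omega)
        have h4 : (d:ℝ)⁻¹ * Sig d c ((t : ℕ) : ZMod (m+1)) ≤ (d:ℝ)⁻¹ * Sig d c 0 :=
          mul_le_mul_of_nonneg_left h3 hdinv0
        linarith
    intro φ
    have h1 : ((φ.val : ℕ) : ZMod (m+1)) = φ := ZMod.natCast_rightInverse φ
    rw [← h1]
    exact hstep φ.val (ZMod.val_lt φ)
  refine ⟨((d:ℝ)-1)/(d:ℝ) * Sig d c 0, mem_HsetIrr hd c hc1 hmax, ?_⟩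
  rw [Real.dist_eq]
  have hcoef0 : (0:ℝ) ≤ ((d:ℝ)-1)/(d:ℝ) := by positivity
  have hcoef1 : ((d:ℝ)-1)/(d:ℝ) ≤ 1 := by
    rw [div_le_one hd0]
    linarith
  have hyge : x ≤ ((d:ℝ)-1)/(d:ℝ) * Sig d c 0 := by
    rw [← hxV]
    exact mul_le_mul_of_nonneg_left hSig0_ge_V hcoef0
  have hylt : ((d:ℝ)-1)/(d:ℝ) * Sig d c 0 - x < ε := by
    rw [← hxV]
    have h1 : ((d:ℝ)-1)/(d:ℝ) * Sig d c 0 - ((d:ℝ)-1)/(d:ℝ) * V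
        = ((d:ℝ)-1)/(d:ℝ) * (Sig d c 0 - V) := by ring
    rw [h1]
    have h2 : Sig d c 0 - V ≤ 2*V*((d:ℝ)⁻¹)^(m+1) := by linarith [hSig0_le]
    have h3 : ((d:ℝ)-1)/(d:ℝ) * (Sig d c 0 - V) ≤ Sig d c 0 - V :=
      mul_le_of_le_one_left (by linarith [hSig0_ge_V]) hcoef1
    have h4 : ((d:ℝ)⁻¹)^(m+1) * (2*V) = 2*V*((d:ℝ)⁻¹)^(m+1) := by ring
    rw [h4] at hm
    linarith
  rw [abs_sub_comm, abs_of_nonneg (by linarith)]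
  linarith

end Main

end HsetIrrDense

/-- **Theorem 5.1 (second part).** `H^{(d)}_irr` is dense in `[(d−1)·log 2, ∞)`. -/
theorem HsetIrr_dense_ge (d : ℕ) (hd : 2 ≤ d) :
    ∀ x : ℝ, ((d : ℝ) - 1) * Real.log 2 ≤ x → x ∈ closure (HsetIrr d) :=
  HsetIrrDense.HsetIrr_dense_ge' d hd
end

section
/- Let d = 2 and let M be the 4×4 {0,1}-matrix [[1,1,1,0],[1,0,0,0],[0,0,1,1],[0,0,1,1]] (the block matrix [[G, R],[O, E_2]] with G = [[1,1],[1,0]], R = [[1,0],[0,0]], and E_2 the 2×2 all-ones matrix). Then h(T_M) > log 2. -/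
open Filter Real

abbrev Mgre : Matrix (Fin 4) (Fin 4) ℕ := !![1, 1, 1, 0; 1, 0, 0, 0; 0, 0, 1, 1; 0, 0, 1, 1]


lemma treeP_row0 (n : ℕ) :
    treeP 2 Mgre (n+1) 0 = (treeP 2 Mgre n 0 + treeP 2 Mgre n 1 + treeP 2 Mgre n 2)^2 := by
  show (∑ j, Mgre 0 j * treeP 2 Mgre n j)^2 = _
  rw [Fin.sum_univ_four]
  norm_num [Mgre, Matrix.cons_val_zero, Matrix.cons_val_one, Matrix.head_cons, Matrix.cons_val_two, Matrix.cons_val_three, Matrix.vecHead, Matrix.vecTail]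

lemma treeP_row1 (n : ℕ) : treeP 2 Mgre (n+1) 1 = (treeP 2 Mgre n 0)^2 := by
  show (∑ j, Mgre 1 j * treeP 2 Mgre n j)^2 = _
  rw [Fin.sum_univ_four]
  norm_num [Mgre, Matrix.cons_val_zero, Matrix.cons_val_one, Matrix.head_cons, Matrix.cons_val_two, Matrix.cons_val_three, Matrix.vecHead, Matrix.vecTail]

lemma key (n : ℕ) :
    (treeP 2 Mgre (n+1) 0 + (treeP 2 Mgre n 0)^2)^2 ≤ treeP 2 Mgre (n+2) 0 := by
  rw [treeP_row0 (n+1), ← treeP_row1 n]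
  apply Nat.pow_le_pow_left
  omega

lemma one_le_f : ∀ n, 1 ≤ treeP 2 Mgre n 0 := by
  intro n
  induction n with
  | zero => simp [treeP]
  | succ n ih =>
      rw [treeP_row0]
      calc 1 = 1^2 := by norm_num
      _ ≤ _ := Nat.pow_le_pow_left (by omega) 2

lemma f2 : treeP 2 Mgre 2 0 = 196 := by decide
lemma f3 : treeP 2 Mgre 3 0 = 116281 := by decide

lemma lower : ∀ n, ((21:ℝ)/10)^(2^(n+3)) ≤ (21/10) * treeP 2 Mgre (n+2) 0 ∧
    ((21:ℝ)/10)^(2^(n+4)) ≤ (21/10) * treeP 2 Mgre (n+3) 0 := by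
  intro n
  induction n with
  | zero =>
      constructor
      · rw [f2]; norm_num
      · rw [f3]; norm_num
  | succ n ih =>
      obtain ⟨h1, h2⟩ := ih
      refine ⟨h2, ?_⟩
      set x : ℝ := ((treeP 2 Mgre (n+2) 0 : ℕ) : ℝ) with hxdef
      set y : ℝ := ((treeP 2 Mgre (n+3) 0 : ℕ) : ℝ) with hydef
      set z : ℝ := ((treeP 2 Mgre (n+4) 0 : ℕ) : ℝ) with hzdef
      set A : ℝ := ((21:ℝ)/10)^(2^(n+3)) with hAdef
      set B : ℝ := ((21:ℝ)/10)^(2^(n+4)) with hBdef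
      have hA : 0 < A := by positivity
      have hB2 : B = A^2 := by
        rw [hAdef, hBdef, ← pow_mul]
        ring_nf
      have hCB : ((21:ℝ)/10)^(2^(n+5)) = B^2 := by
        rw [hBdef, ← pow_mul]
        ring_nf
      have hx : 0 ≤ x := Nat.cast_nonneg _
      have hz : (y + x^2)^2 ≤ z := by
        rw [hydef, hxdef, hzdef]
        exact_mod_cast key (n+2)
      have s : (31/10:ℝ)*B ≤ (21/10)^2*(y + x^2) := by
        have hax : A^2 ≤ ((21/10)*x)^2 := by
          apply pow_le_pow_left₀ hA.le h1
        nlinarith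
      have hBpos : 0 ≤ (31/10:ℝ)*B := by positivity
      have s2 : ((31/10:ℝ)*B)^2 ≤ ((21/10)^2*(y+x^2))^2 := pow_le_pow_left₀ hBpos s 2
      have hz4 : ((21:ℝ)/10)^4*(y+x^2)^2 ≤ ((21:ℝ)/10)^4*z :=
        mul_le_mul_of_nonneg_left hz (by positivity)
      have hzn : (0:ℝ) ≤ z := Nat.cast_nonneg _
      rw [hCB]
      nlinarith [s2, hz4, hzn, sq_nonneg B]


lemma Mbin : ∀ i j, Mgre i j ≤ 1 := by intro i j; fin_cases i <;> fin_cases j <;> decide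

lemma S_le : ∀ n, 4 * (∑ i, treeP 2 Mgre n i) ≤ 4^(2^(n+1)) := by
  intro n
  induction n with
  | zero => decide
  | succ n ih =>
      have inner : ∀ i : Fin 4, (∑ j, Mgre i j * treeP 2 Mgre n j) ≤ ∑ j, treeP 2 Mgre n j := by
        intro i
        apply Finset.sum_le_sum
        intro j _
        calc Mgre i j * treeP 2 Mgre n j ≤ 1 * treeP 2 Mgre n j :=
              Nat.mul_le_mul_right _ (Mbin i j)
        _ = treeP 2 Mgre n j := one_mul _
      have step : (∑ i, treeP 2 Mgre (n+1) i) ≤ 4 * (∑ j, treeP 2 Mgre n j)^2 := by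
        show (∑ i : Fin 4, (∑ j, Mgre i j * treeP 2 Mgre n j)^2) ≤ _
        calc (∑ i : Fin 4, (∑ j, Mgre i j * treeP 2 Mgre n j)^2)
            ≤ ∑ _i : Fin 4, (∑ j, treeP 2 Mgre n j)^2 :=
              Finset.sum_le_sum (fun i _ => Nat.pow_le_pow_left (inner i) 2)
        _ = 4 * (∑ j, treeP 2 Mgre n j)^2 := by
              rw [Finset.sum_const]; simp [mul_comm]
      calc 4 * (∑ i, treeP 2 Mgre (n+1) i) ≤ 4 * (4 * (∑ j, treeP 2 Mgre n j)^2) :=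
            Nat.mul_le_mul le_rfl step
      _ = (4 * (∑ j, treeP 2 Mgre n j))^2 := by ring
      _ ≤ (4^(2^(n+1)))^2 := Nat.pow_le_pow_left ih 2
      _ = 4^(2^(n+2)) := by rw [← pow_mul]; congr 1



lemma dc (n : ℕ) : deltaCard 2 n + 1 = 2^(n+1) := by
  induction n with
  | zero => rfl
  | succ n ih =>
      have h : deltaCard 2 (n+1) = deltaCard 2 n + 2^(n+1) := Finset.sum_range_succ _ _
      rw [h, pow_succ 2 (n+1)]
      omega

lemma f_le_S (n : ℕ) : treeP 2 Mgre n 0 ≤ ∑ i, treeP 2 Mgre n i :=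
  Finset.single_le_sum (fun i _ => Nat.zero_le _) (Finset.mem_univ 0)


/-- **Proposition 6.1 (first part).** For `d = 2` and the block matrix
`[[G, R],[O, E₂]]` with `G = [[1,1],[1,0]]` and `R = [[1,0],[0,0]]`,
the entropy exceeds `log 2`. -/
theorem treeEntropy_GRE_gt_log_two :
    treeEntropy 2 (!![1, 1, 1, 0; 1, 0, 0, 0; 0, 0, 1, 1; 0, 0, 1, 1] :
      Matrix (Fin 4) (Fin 4) ℕ) > Real.log 2 := by
  show treeEntropy 2 Mgre > Real.log 2
  have hS1 : ∀ n, (1:ℝ) ≤ ∑ i : Fin 4, (treeP 2 Mgre n i : ℝ) := by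
    intro n
    have := le_trans (one_le_f n) (f_le_S n)
    exact_mod_cast this
  -- eventual lower bound
  have hlow : ∀ m : ℕ, Real.log (21/10) ≤
      Real.log (∑ i, treeP 2 Mgre (m+2) i) / (deltaCard 2 (m+2) : ℝ) := by
    intro m
    set D := deltaCard 2 (m+2) with hDdef
    have hD : D + 1 = 2^(m+3) := dc (m+2)
    have hDpos : 1 ≤ D := by
      have : 2 ≤ 2^(m+3) := by
        calc 2 = 2^1 := rfl
        _ ≤ 2^(m+3) := Nat.pow_le_pow_right (by norm_num) (by omega)
      omega
    have h1 : ((21:ℝ)/10)^(D+1) ≤ (21/10) * treeP 2 Mgre (m+2) 0 := by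
      rw [hD]; exact (lower m).1
    have h2 : ((21:ℝ)/10)^D ≤ treeP 2 Mgre (m+2) 0 := by
      rw [pow_succ] at h1
      exact le_of_mul_le_mul_right (by linarith [h1]) (by norm_num : (0:ℝ) < 21/10)
    have h3 : ((21:ℝ)/10)^D ≤ ∑ i : Fin 4, (treeP 2 Mgre (m+2) i : ℝ) := by
      refine h2.trans ?_
      exact_mod_cast f_le_S (m+2)
    have h4 : (D:ℝ) * Real.log (21/10) ≤ Real.log (∑ i : Fin 4, (treeP 2 Mgre (m+2) i : ℝ)) := by
      rw [← Real.log_pow]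
      exact (Real.log_le_log_iff (by positivity) (by linarith [hS1 (m+2)])).mpr h3
    have hDR : (0:ℝ) < (D:ℝ) := by exact_mod_cast hDpos
    rw [le_div_iff₀ hDR]
    calc Real.log (21/10) * (D:ℝ) = (D:ℝ) * Real.log (21/10) := mul_comm _ _
    _ ≤ _ := h4
  -- boundedness above
  have hbdd : IsBoundedUnder (· ≤ ·) atTop
      (fun n => Real.log (∑ i, treeP 2 Mgre n i) / (deltaCard 2 n : ℝ)) := by
    apply isBoundedUnder_of
    refine ⟨2 * Real.log 4, fun n => ?_⟩
    set D := deltaCard 2 n with hDdef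
    have hD : D + 1 = 2^(n+1) := dc n
    have hDpos : 1 ≤ D := by
      have : 2 ≤ 2^(n+1) := by
        calc 2 = 2^1 := rfl
        _ ≤ 2^(n+1) := Nat.pow_le_pow_right (by norm_num) (by omega)
      omega
    have hDR : (0:ℝ) < (D:ℝ) := by exact_mod_cast hDpos
    have hSle : (∑ i : Fin 4, (treeP 2 Mgre n i : ℝ)) ≤ 4^(2^(n+1)) := by
      have h : (∑ i, treeP 2 Mgre n i) ≤ 4^(2^(n+1)) :=
        le_trans (Nat.le_mul_of_pos_left _ (by norm_num)) (S_le n)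
      exact_mod_cast h
    have hlog : Real.log (∑ i : Fin 4, (treeP 2 Mgre n i : ℝ)) ≤ (2^(n+1) : ℕ) * Real.log 4 := by
      rw [← Real.log_pow]
      exact (Real.log_le_log_iff (by linarith [hS1 n]) (by positivity)).mpr hSle
    rw [div_le_iff₀ hDR]
    have hexp : ((2^(n+1) : ℕ) : ℝ) ≤ 2 * (D:ℝ) := by
      have : (2:ℕ)^(n+1) ≤ 2 * D := by omega
      exact_mod_cast this
    have hlog4 : (0:ℝ) ≤ Real.log 4 := Real.log_nonneg (by norm_num)
    calc Real.log (∑ i : Fin 4, (treeP 2 Mgre n i : ℝ)) ≤ ((2^(n+1) : ℕ) : ℝ) * Real.log 4 := hlog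
    _ ≤ (2 * (D:ℝ)) * Real.log 4 := by
        apply mul_le_mul_of_nonneg_right hexp hlog4
    _ = 2 * Real.log 4 * (D:ℝ) := by ring
  have hfreq : ∃ᶠ n in atTop, Real.log (21/10) ≤
      Real.log (∑ i, treeP 2 Mgre n i) / (deltaCard 2 n : ℝ) := by
    apply Eventually.frequently
    rw [eventually_atTop]
    exact ⟨2, fun n hn => by obtain ⟨m, rfl⟩ := Nat.exists_eq_add_of_le hn; rw [add_comm]; exact hlow m⟩
  have hle : Real.log (21/10) ≤ treeEntropy 2 Mgre := le_limsup_of_frequently_le hfreq hbdd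
  have : Real.log 2 < Real.log (21/10) := Real.log_lt_log (by norm_num) (by norm_num)
  linarith
end

section
/- Let d = 2 and let M be the 4×4 {0,1}-matrix [[0,1,1,0],[1,1,0,0],[0,0,1,1],[0,0,1,1]] (the block matrix [[G*, R],[O, E_2]] with G* = [[0,1],[1,1]], R = [[1,0],[0,0]], and E_2 the 2×2 all-ones matrix). Then h(T_M) = log 2. -/
open Filter Real

def Mex : Matrix (Fin 4) (Fin 4) ℕ := !![0, 1, 1, 0; 1, 1, 0, 0; 0, 0, 1, 1; 0, 0, 1, 1]

lemma rec0 (n : ℕ) : treeP 2 Mex (n+1) 0 = (treeP 2 Mex n 1 + treeP 2 Mex n 2)^2 := by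
  simp [treeP, Fin.sum_univ_four, Mex, Matrix.vecHead, Matrix.vecTail]
lemma rec1 (n : ℕ) : treeP 2 Mex (n+1) 1 = (treeP 2 Mex n 0 + treeP 2 Mex n 1)^2 := by
  simp [treeP, Fin.sum_univ_four, Mex, Matrix.vecHead, Matrix.vecTail]
lemma rec2 (n : ℕ) : treeP 2 Mex (n+1) 2 = (treeP 2 Mex n 2 + treeP 2 Mex n 3)^2 := by
  simp [treeP, Fin.sum_univ_four, Mex, Matrix.vecHead, Matrix.vecTail]
lemma rec3 (n : ℕ) : treeP 2 Mex (n+1) 3 = (treeP 2 Mex n 2 + treeP 2 Mex n 3)^2 := by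
  simp [treeP, Fin.sum_univ_four, Mex, Matrix.vecHead, Matrix.vecTail]

lemma exp_arith (n : ℕ) : 2 ^ (n + 1) - 2 + (2 ^ (n + 1) - 2) + 2 = 2 ^ (n + 2) - 2 := by
  have h : 2 ≤ 2 ^ (n + 1) := Nat.one_lt_two_pow (by omega)
  have h2 : 2 ^ (n + 2) = 2 * 2 ^ (n + 1) := by ring
  omega

lemma q23 (n : ℕ) : treeP 2 Mex n 2 = 2 ^ (2 ^ (n+1) - 2) ∧
    treeP 2 Mex n 3 = 2 ^ (2 ^ (n+1) - 2) := by
  induction n with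
  | zero => constructor <;> rfl
  | succ n ih =>
    obtain ⟨h2, h3⟩ := ih
    have key : (treeP 2 Mex n 2 + treeP 2 Mex n 3)^2 = 2 ^ (2 ^ (n+2) - 2) := by
      rw [h2, h3, ← two_mul, ← pow_succ', ← pow_mul']
      congr 1
      have := exp_arith n
      omega
    exact ⟨by rw [rec2, key], by rw [rec3, key]⟩

lemma p01 (n : ℕ) : treeP 2 Mex n 0 ≤ 2 ^ (2 ^ (n+1) - 2) ∧
    treeP 2 Mex n 1 ≤ 2 ^ (2 ^ (n+1) - 2) := by
  induction n with
  | zero => constructor <;> simp [treeP]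
  | succ n ih =>
    obtain ⟨h0, h1⟩ := ih
    have h2 := (q23 n).1
    have key : (2 ^ (2 ^ (n+1) - 2) + 2 ^ (2 ^ (n+1) - 2) : ℕ)^2 = 2 ^ (2 ^ (n+2) - 2) := by
      rw [← two_mul, ← pow_succ', ← pow_mul']
      congr 1
      have := exp_arith n
      omega
    constructor
    · rw [rec0]
      calc (treeP 2 Mex n 1 + treeP 2 Mex n 2)^2
          ≤ (2 ^ (2 ^ (n+1) - 2) + 2 ^ (2 ^ (n+1) - 2) : ℕ)^2 := by
            apply Nat.pow_le_pow_left; omega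
        _ = _ := key
    · rw [rec1]
      calc (treeP 2 Mex n 0 + treeP 2 Mex n 1)^2
          ≤ (2 ^ (2 ^ (n+1) - 2) + 2 ^ (2 ^ (n+1) - 2) : ℕ)^2 := by
            apply Nat.pow_le_pow_left; omega
        _ = _ := key

lemma sum_bounds (n : ℕ) :
    2 ^ (2 ^ (n+1) - 1) ≤ ∑ i, treeP 2 Mex n i ∧
    ∑ i, treeP 2 Mex n i ≤ 2 ^ (2 ^ (n+1)) := by
  have hq := q23 n
  have hp := p01 n
  have hS : ∑ i, treeP 2 Mex n i =
      treeP 2 Mex n 0 + treeP 2 Mex n 1 + treeP 2 Mex n 2 + treeP 2 Mex n 3 := by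
    rw [Fin.sum_univ_four]
  have h2 : 2 ≤ 2 ^ (n+1) := Nat.one_lt_two_pow (by omega)
  have e1 : (2:ℕ) ^ (2 ^ (n+1) - 1) = 2 * 2 ^ (2 ^ (n+1) - 2) := by
    rw [← pow_succ']; congr 1; omega
  have e2 : (2:ℕ) ^ (2 ^ (n+1)) = 4 * 2 ^ (2 ^ (n+1) - 2) := by
    have : (4:ℕ) = 2^2 := rfl
    rw [this, ← pow_add]; congr 1; omega
  constructor
  · rw [hS, e1]; omega
  · rw [hS, e2]; omega

lemma deltaCard_two (n : ℕ) : deltaCard 2 n = 2 ^ (n+1) - 1 := by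
  induction n with
  | zero => rfl
  | succ n ih =>
    have h : 2 ≤ 2 ^ (n+1) := Nat.one_lt_two_pow (by omega)
    have h2 : 2 ^ (n + 2) = 2 * 2 ^ (n + 1) := by ring
    rw [deltaCard, Finset.sum_range_succ, ← deltaCard, ih]
    omega


/-- **Proposition 6.1 (second part).** For `d = 2` and the block matrix
`[[G*, R],[O, E₂]]` with `G* = [[0,1],[1,1]]` and `R = [[1,0],[0,0]]`,
the entropy equals `log 2`. -/
theorem treeEntropy_GstarRE_eq_log_two :
    treeEntropy 2 (!![0, 1, 1, 0; 1, 1, 0, 0; 0, 0, 1, 1; 0, 0, 1, 1] :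
      Matrix (Fin 4) (Fin 4) ℕ) = Real.log 2 := by
  have hM : (!![0, 1, 1, 0; 1, 1, 0, 0; 0, 0, 1, 1; 0, 0, 1, 1] :
      Matrix (Fin 4) (Fin 4) ℕ) = Mex := rfl
  rw [hM, treeEntropy]
  set f : ℕ → ℝ := fun n => Real.log (∑ i, treeP 2 Mex n i) / (deltaCard 2 n : ℝ) with hf
  have hDpos : ∀ n, (0:ℝ) < (deltaCard 2 n : ℝ) := by
    intro n
    have : 1 ≤ deltaCard 2 n := by
      rw [deltaCard_two]
      have : 2 ≤ 2 ^ (n+1) := Nat.one_lt_two_pow (by omega)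
      omega
    exact_mod_cast this
  have hcast : ∀ n, (∑ i, ((treeP 2 Mex n i : ℕ) : ℝ)) = ((∑ i, treeP 2 Mex n i : ℕ) : ℝ) := by
    intro n; push_cast; ring
  have hlow : ∀ n, Real.log 2 ≤ f n := by
    intro n
    have hb := (sum_bounds n).1
    have hlog : ((2 ^ (n+1) - 1 : ℕ) : ℝ) * Real.log 2 ≤
        Real.log ((∑ i, treeP 2 Mex n i : ℕ) : ℝ) := by
      calc ((2 ^ (n+1) - 1 : ℕ) : ℝ) * Real.log 2
          = Real.log ((2:ℝ) ^ (2 ^ (n+1) - 1)) := by rw [Real.log_pow]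
        _ ≤ _ := by
            apply Real.log_le_log (by positivity)
            exact_mod_cast hb
    show Real.log 2 ≤ _
    rw [hf]
    simp only [hcast]
    rw [le_div_iff₀ (hDpos n)]
    calc Real.log 2 * (deltaCard 2 n : ℝ) = ((2 ^ (n+1) - 1 : ℕ) : ℝ) * Real.log 2 := by
          rw [deltaCard_two]; ring
      _ ≤ _ := hlog
  have hhigh : ∀ n, f n ≤ Real.log 2 + Real.log 2 / (deltaCard 2 n : ℝ) := by
    intro n
    have hb := (sum_bounds n).2
    have hspos : (0:ℝ) < (∑ i, treeP 2 Mex n i : ℕ) := by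
      have := (sum_bounds n).1
      have : 1 ≤ ∑ i, treeP 2 Mex n i := le_trans (Nat.one_le_two_pow) this
      exact_mod_cast this
    have hlog : Real.log ((∑ i, treeP 2 Mex n i : ℕ) : ℝ) ≤ ((2 ^ (n+1) : ℕ) : ℝ) * Real.log 2 := by
      calc Real.log ((∑ i, treeP 2 Mex n i : ℕ) : ℝ)
          ≤ Real.log ((2:ℝ) ^ (2 ^ (n+1))) := by
            apply Real.log_le_log hspos
            exact_mod_cast hb
        _ = ((2 ^ (n+1) : ℕ) : ℝ) * Real.log 2 := by rw [Real.log_pow]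
    rw [hf]
    simp only [hcast]
    rw [div_le_iff₀ (hDpos n)]
    have hD : ((deltaCard 2 n : ℕ) : ℝ) = ((2 ^ (n+1) : ℕ) : ℝ) - 1 := by
      rw [deltaCard_two]
      have : 2 ≤ 2 ^ (n+1) := Nat.one_lt_two_pow (by omega)
      push_cast [Nat.cast_sub (by omega : 1 ≤ 2 ^ (n+1))]
      ring
    have hDne : (deltaCard 2 n : ℝ) ≠ 0 := ne_of_gt (hDpos n)
    calc Real.log ((∑ i, treeP 2 Mex n i : ℕ) : ℝ) ≤ ((2 ^ (n+1) : ℕ) : ℝ) * Real.log 2 := hlog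
      _ = (Real.log 2 + Real.log 2 / (deltaCard 2 n : ℝ)) * (deltaCard 2 n : ℝ) := by
          have : ((2 ^ (n+1) : ℕ) : ℝ) = (deltaCard 2 n : ℝ) + 1 := by rw [hD]; ring
          rw [this]
          field_simp
  have hDtop : Tendsto (fun n => (deltaCard 2 n : ℝ)) atTop atTop := by
    apply tendsto_natCast_atTop_atTop.comp
    apply tendsto_atTop_mono _ tendsto_id
    intro n
    simp only [id_eq]
    rw [deltaCard_two]
    have : n + 2 ≤ 2 ^ (n+1) := by
      calc n + 2 ≤ n + 1 + 1 := by omega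
        _ ≤ 2 ^ (n+1) := Nat.succ_le_of_lt Nat.lt_two_pow_self
    omega
  have hg : Tendsto (fun n => Real.log 2 + Real.log 2 / (deltaCard 2 n : ℝ)) atTop
      (nhds (Real.log 2)) := by
    have : Tendsto (fun n => Real.log 2 / (deltaCard 2 n : ℝ)) atTop (nhds 0) :=
      Tendsto.div_atTop tendsto_const_nhds hDtop
    simpa using tendsto_const_nhds.add this
  have hft : Tendsto f atTop (nhds (Real.log 2)) :=
    tendsto_of_tendsto_of_tendsto_of_le_of_le tendsto_const_nhds hg hlow hhigh
  exact hft.limsup_eq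
end

section
/- Let d ≥ 2, b > a ≥ 1, 0 < l ≤ b with a + l > b, and define the real sequence χ_0 = 1, χ_{n+1} = ((a·χ_n + l)/b)^d. Then: if the sequence (χ_n) is bounded, h(T_{M(a,b;l)}) = log b; and if χ_n → ∞ as n → ∞, then h(T_{M(a,b;l)}) > log b. In particular h(T_{M(a,b;l)}) = log b if and only if (χ_n) is bounded. -/
open Filter Real
set_option maxHeartbeats 1000000

def qs (d b : ℕ) : ℕ → ℕ
  | 0 => 1
  | n + 1 => (b * qs d b n) ^ d

def ps (d a b l : ℕ) : ℕ → ℕ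
  | 0 => 1
  | n + 1 => (a * ps d a b l n + l * qs d b n) ^ d

lemma deltaCard_succ (d n : ℕ) : deltaCard d (n + 1) = 1 + d * deltaCard d n := by
  rw [deltaCard, deltaCard, geom_sum_succ]; ring

lemma deltaCard_ge (d n : ℕ) (hd : 1 ≤ d) : n + 1 ≤ deltaCard d n := by
  calc n + 1 = ∑ _i ∈ Finset.range (n+1), 1 := by simp
  _ ≤ deltaCard d n := Finset.sum_le_sum fun i _ => Nat.one_le_pow _ _ hd

lemma deltaCard_le (d n : ℕ) (hd : 2 ≤ d) : deltaCard d n ≤ 2 * d ^ n := by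
  induction n with
  | zero => simp [deltaCard]
  | succ n ih =>
    have : deltaCard d (n+1) = deltaCard d n + d ^ (n+1) := by
      simp [deltaCard, Finset.sum_range_succ]
    rw [this]
    have h2 : 2 * d ^ n ≤ d ^ (n+1) := by
      rw [pow_succ, mul_comm]
      exact Nat.mul_le_mul_left _ hd
    calc deltaCard d n + d ^ (n+1) ≤ 2 * d ^ n + d ^ (n+1) := by
          exact Nat.add_le_add_right ih _
      _ ≤ d ^ (n+1) + d ^ (n+1) := Nat.add_le_add_right h2 _
      _ = 2 * d ^ (n+1) := (two_mul _).symm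

lemma treeP_eq {d a b l : ℕ} (ha : 1 ≤ a) (M : Matrix (Fin (a+b)) (Fin (a+b)) ℕ)
    (hM : IsMabl a b l M) :
    ∀ n (i : Fin (a+b)), treeP d M n i = if (i:ℕ) < a then ps d a b l n else qs d b n := by
  intro n
  induction n with
  | zero => intro i; simp [treeP, ps, qs]
  | succ n ih =>
    intro i
    have key : ∀ j, M i j * treeP d M n j
        = M i j * (if (j:ℕ) < a then ps d a b l n else qs d b n) := fun j => by rw [ih j]
    have hsum : (∑ j, M i j * treeP d M n j)
        = ∑ j : Fin a, M i (Fin.castAdd b j) * ps d a b l n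
          + ∑ j : Fin b, M i (Fin.natAdd a j) * qs d b n := by
      rw [Finset.sum_congr rfl fun j _ => key j, Fin.sum_univ_add]
      congr 1
      · exact Finset.sum_congr rfl fun j _ => by
          rw [if_pos]; exact j.isLt
      · exact Finset.sum_congr rfl fun j _ => by
          rw [if_neg]; simp [Fin.natAdd]
    by_cases hi : (i:ℕ) < a
    · rw [if_pos hi]
      have h1 : ∑ j : Fin a, M i (Fin.castAdd b j) * ps d a b l n = a * ps d a b l n := by
        have : ∀ j : Fin a, M i (Fin.castAdd b j) = 1 := fun j =>
          hM.2.1 i _ hi (by simpa using j.isLt)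
        simp [this]
      have h2 : ∑ j : Fin b, M i (Fin.natAdd a j) * qs d b n = l * qs d b n := by
        rw [← Finset.sum_mul]
        congr 1
        have := hM.2.2.2.2 i hi
        rw [Fin.sum_univ_add] at this
        have hz : (∑ j : Fin a, if a ≤ ((Fin.castAdd b j : Fin (a+b)):ℕ) then M i (Fin.castAdd b j) else 0) = 0 :=
          Finset.sum_eq_zero fun j _ => if_neg (by simpa using Nat.not_le.2 j.isLt)
        have ho : (∑ j : Fin b, if a ≤ ((Fin.natAdd a j : Fin (a+b)):ℕ) then M i (Fin.natAdd a j) else 0)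
            = ∑ j : Fin b, M i (Fin.natAdd a j) :=
          Finset.sum_congr rfl fun j _ => if_pos (by simp)
        rw [hz, ho, zero_add] at this
        exact this
      show (∑ j, M i j * treeP d M n j) ^ d = ps d a b l (n+1)
      rw [hsum, h1, h2]
      rfl
    · rw [if_neg hi]
      push_neg at hi
      have h1 : ∑ j : Fin a, M i (Fin.castAdd b j) * ps d a b l n = 0 := by
        apply Finset.sum_eq_zero
        intro j _
        rw [hM.2.2.2.1 i _ hi (by simpa using j.isLt), zero_mul]
      have h2 : ∑ j : Fin b, M i (Fin.natAdd a j) * qs d b n = b * qs d b n := by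
        have : ∀ j : Fin b, M i (Fin.natAdd a j) = 1 := fun j =>
          hM.2.2.1 i _ hi (by simp)
        simp [this]
      show (∑ j, M i j * treeP d M n j) ^ d = qs d b (n+1)
      rw [hsum, h1, h2, zero_add]
      rfl

lemma sum_treeP {d a b l : ℕ} (ha : 1 ≤ a) (M : Matrix (Fin (a+b)) (Fin (a+b)) ℕ)
    (hM : IsMabl a b l M) (n : ℕ) :
    (∑ i, treeP d M n i) = a * ps d a b l n + b * qs d b n := by
  have h := treeP_eq (d := d) ha M hM n
  rw [Finset.sum_congr rfl fun i _ => h i, Fin.sum_univ_add]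
  congr 1
  · have : ∀ j : Fin a, (if ((Fin.castAdd b j : Fin (a+b)):ℕ) < a then ps d a b l n else qs d b n) = ps d a b l n :=
      fun j => if_pos (by simpa using j.isLt)
    simp [this]
  · have : ∀ j : Fin b, (if ((Fin.natAdd a j : Fin (a+b)):ℕ) < a then ps d a b l n else qs d b n) = qs d b n :=
      fun j => if_neg (by simp)
    simp [this]

lemma qs_pos {d b : ℕ} (hb : 0 < b) (n : ℕ) : 0 < qs d b n := by
  induction n with
  | zero => exact Nat.one_pos
  | succ n ih => exact pow_pos (Nat.mul_pos hb ih) d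

lemma ps_pos {d a b l : ℕ} (ha : 0 < a) (hb : 0 < b) (n : ℕ) : 0 < ps d a b l n := by
  induction n with
  | zero => exact Nat.one_pos
  | succ n ih =>
    exact pow_pos (Nat.lt_of_lt_of_le (Nat.mul_pos ha ih) (Nat.le_add_right _ _)) d

lemma chi_eq {d a b l : ℕ} (hb : 0 < b) (χ : ℕ → ℝ) (hχ0 : χ 0 = 1)
    (hχ : ∀ n, χ (n + 1) = (((a : ℝ) * χ n + l) / b) ^ d) (n : ℕ) :
    χ n = (ps d a b l n : ℝ) / (qs d b n : ℝ) := by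
  induction n with
  | zero => simp [hχ0, ps, qs]
  | succ n ih =>
    have hq : ((qs d b n : ℝ)) ≠ 0 := Nat.cast_ne_zero.2 (qs_pos hb n).ne'
    have hbr : ((b:ℝ)) ≠ 0 := Nat.cast_ne_zero.2 hb.ne'
    rw [hχ n, ih]
    show _ = ((ps d a b l (n+1) : ℕ) : ℝ) / ((qs d b (n+1) : ℕ) : ℝ)
    rw [show ps d a b l (n+1) = (a * ps d a b l n + l * qs d b n) ^ d from rfl,
        show qs d b (n+1) = (b * qs d b n) ^ d from rfl]
    push_cast
    rw [← div_pow]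
    congr 1
    have h1 : (a:ℝ) * ((ps d a b l n : ℝ) / (qs d b n : ℝ)) + l
        = ((a:ℝ) * ps d a b l n + l * qs d b n) / qs d b n := by field_simp
    rw [h1, div_div, mul_comm (qs d b n : ℝ) (b:ℝ)]

lemma log_qs {d b : ℕ} (hb : 0 < b) (n : ℕ) :
    Real.log (qs d b n) = ((deltaCard d n : ℝ) - 1) * Real.log b := by
  induction n with
  | zero => simp [qs, deltaCard]
  | succ n ih =>
    have hq : (0:ℝ) < (qs d b n : ℝ) := by exact_mod_cast qs_pos hb n
    have hbr : (0:ℝ) < (b:ℝ) := by exact_mod_cast hb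
    rw [show qs d b (n+1) = (b * qs d b n) ^ d from rfl]
    push_cast
    rw [Real.log_pow, Real.log_mul hbr.ne' hq.ne', ih, deltaCard_succ]
    push_cast
    ring

lemma chi_step {d a b l : ℕ} (ha : 1 ≤ a) (hl : 0 < l) (hb : 0 < b) (hsum : b < a + l)
    (χ : ℕ → ℝ) (hχ0 : χ 0 = 1)
    (hχ : ∀ n, χ (n + 1) = (((a : ℝ) * χ n + l) / b) ^ d) :
    ∀ n, 1 ≤ χ n ∧ χ n ≤ χ (n + 1) := by
  have hbr : (0:ℝ) < (b:ℝ) := by exact_mod_cast hb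
  have har : (1:ℝ) ≤ (a:ℝ) := by exact_mod_cast ha
  have hsr : (b:ℝ) ≤ (a:ℝ) + l := by exact_mod_cast hsum.le
  have base : ∀ x : ℝ, 1 ≤ x → 1 ≤ ((a:ℝ) * x + l) / b := by
    intro x hx
    rw [le_div_iff₀ hbr, one_mul]
    nlinarith
  intro n
  induction n with
  | zero =>
    refine ⟨hχ0.ge, ?_⟩
    rw [hχ0, hχ 0, hχ0]
    exact one_le_pow₀ (base 1 le_rfl)
  | succ n ih =>
    obtain ⟨h1, h2⟩ := ih
    have h1' : 1 ≤ χ (n+1) := by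
      rw [hχ n]
      exact one_le_pow₀ (base _ h1)
    refine ⟨h1', ?_⟩
    rw [hχ n, hχ (n+1)]
    have h0 : (0:ℝ) ≤ (a:ℝ) * χ n + l := by nlinarith
    gcongr

lemma sum_le_pow {d a b l : ℕ} (hlb : l ≤ b) (n : ℕ) :
    a * ps d a b l n + b * qs d b n ≤ (a + b) ^ deltaCard d n := by
  induction n with
  | zero => simp [ps, qs, deltaCard]
  | succ n ih =>
    set S := a * ps d a b l n + b * qs d b n with hS
    have h1 : a * ps d a b l n + l * qs d b n ≤ S := by
      rw [hS]; exact Nat.add_le_add_left (Nat.mul_le_mul_right _ hlb) _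
    have h2 : b * qs d b n ≤ S := Nat.le_add_left _ _
    calc a * ps d a b l (n+1) + b * qs d b (n+1)
        = a * (a * ps d a b l n + l * qs d b n) ^ d + b * (b * qs d b n) ^ d := rfl
      _ ≤ a * S ^ d + b * S ^ d := by
          exact Nat.add_le_add (Nat.mul_le_mul_left _ (Nat.pow_le_pow_left h1 d))
            (Nat.mul_le_mul_left _ (Nat.pow_le_pow_left h2 d))
      _ = (a + b) * S ^ d := by ring
      _ ≤ (a + b) * ((a+b) ^ deltaCard d n) ^ d := by
          exact Nat.mul_le_mul_left _ (Nat.pow_le_pow_left ih d)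
      _ = (a + b) ^ (1 + d * deltaCard d n) := by
          rw [← pow_mul, pow_add, pow_one, mul_comm d _]
      _ = (a + b) ^ deltaCard d (n+1) := by rw [deltaCard_succ]

theorem mabl_main {d a b l : ℕ} (hd : 2 ≤ d)
    (ha : 1 ≤ a) (hab : a < b) (hl : 0 < l) (hlb : l ≤ b) (hsum : b < a + l)
    (M : Matrix (Fin (a + b)) (Fin (a + b)) ℕ) (hM : IsMabl a b l M)
    (χ : ℕ → ℝ) (hχ0 : χ 0 = 1)
    (hχ : ∀ n, χ (n + 1) = (((a : ℝ) * χ n + l) / b) ^ d) :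
    ((∃ C : ℝ, ∀ n, χ n ≤ C) → (Filter.limsup (fun n => Real.log (∑ i, treeP d M n i) / (deltaCard d n : ℝ)) Filter.atTop) = Real.log b) ∧
    (Filter.Tendsto χ Filter.atTop Filter.atTop → (Filter.limsup (fun n => Real.log (∑ i, treeP d M n i) / (deltaCard d n : ℝ)) Filter.atTop) > Real.log b) ∧
    ((Filter.limsup (fun n => Real.log (∑ i, treeP d M n i) / (deltaCard d n : ℝ)) Filter.atTop) = Real.log b ↔ ∃ C : ℝ, ∀ n, χ n ≤ C) := by
  have hb : 0 < b := lt_of_le_of_lt (Nat.zero_le a) hab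
  have hd1 : 1 ≤ d := le_trans one_le_two hd
  have hbr : (0:ℝ) < (b:ℝ) := by exact_mod_cast hb
  have har : (1:ℝ) ≤ (a:ℝ) := by exact_mod_cast ha
  have hdr : (2:ℝ) ≤ (d:ℝ) := by exact_mod_cast hd
  have hchi := chi_step (d := d) ha hl hb hsum χ hχ0 hχ
  have hchi1 : ∀ n, 1 ≤ χ n := fun n => (hchi n).1
  have hmono : Monotone χ := monotone_nat_of_le_succ fun n => (hchi n).2
  set f : ℕ → ℝ := fun n => Real.log (∑ i, treeP d M n i) / (deltaCard d n : ℝ) with hf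
  have hΔge : ∀ n : ℕ, ((n:ℝ)+1) ≤ (deltaCard d n : ℝ) := fun n => by
    exact_mod_cast deltaCard_ge d n hd1
  have hΔpos : ∀ n, (0:ℝ) < (deltaCard d n : ℝ) := fun n =>
    lt_of_lt_of_le (by positivity) (hΔge n)
  have hΔtop : Tendsto (fun n : ℕ => (deltaCard d n : ℝ)) atTop atTop :=
    tendsto_atTop_mono hΔge (by
      have := tendsto_natCast_atTop_atTop (R := ℝ)
      exact Tendsto.atTop_add this tendsto_const_nhds)
  -- key identity
  have hkey : ∀ n, f n = Real.log b
      + (Real.log ((a:ℝ) * χ n + b) - Real.log b) / (deltaCard d n : ℝ) := by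
    intro n
    have hq : (0:ℝ) < (qs d b n : ℝ) := by exact_mod_cast qs_pos hb n
    have hx : (0:ℝ) < (a:ℝ) * χ n + b := by nlinarith [hchi1 n]
    have hsumP : ((∑ i, treeP d M n i : ℕ) : ℝ) = ((a:ℝ) * χ n + b) * qs d b n := by
      rw [sum_treeP ha M hM n]
      push_cast
      rw [chi_eq hb χ hχ0 hχ n]
      field_simp
    show Real.log (∑ i, (treeP d M n i : ℝ)) / (deltaCard d n : ℝ) = _
    rw [← Nat.cast_sum, hsumP, Real.log_mul hx.ne' hq.ne', log_qs hb n]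
    field_simp [(hΔpos n).ne']
    ring
  -- uniform upper bound
  have hfle : ∀ n, f n ≤ Real.log (a+b) := by
    intro n
    have hS1 : 1 ≤ a * ps d a b l n + b * qs d b n :=
      le_trans (Nat.one_le_iff_ne_zero.2 (Nat.mul_pos (lt_of_lt_of_le Nat.one_pos ha) (ps_pos (lt_of_lt_of_le Nat.one_pos ha) hb n)).ne') (Nat.le_add_right _ _)
    have hSr : (0:ℝ) < ((a * ps d a b l n + b * qs d b n : ℕ) : ℝ) := by exact_mod_cast hS1
    have hle := sum_le_pow (d := d) (a := a) (b := b) (l := l) hlb n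
    show Real.log (∑ i, (treeP d M n i : ℝ)) / (deltaCard d n : ℝ) ≤ _
    rw [← Nat.cast_sum, sum_treeP ha M hM n, div_le_iff₀ (hΔpos n)]
    calc Real.log ((a * ps d a b l n + b * qs d b n : ℕ) : ℝ)
        ≤ Real.log (((a + b) ^ deltaCard d n : ℕ) : ℝ) :=
          Real.log_le_log hSr (by exact_mod_cast hle)
      _ = (deltaCard d n : ℝ) * Real.log (a+b) := by
          push_cast
          rw [Real.log_pow]
      _ = Real.log (a+b) * (deltaCard d n : ℝ) := mul_comm _ _
  -- Part 1
  have part1 : (∃ C : ℝ, ∀ n, χ n ≤ C) → Filter.limsup f Filter.atTop = Real.log b := by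
    rintro ⟨C, hC⟩
    set C' := max C 1 with hC'
    have hC1 : ∀ n, χ n ≤ C' := fun n => le_trans (hC n) (le_max_left _ _)
    set K := Real.log ((a:ℝ) * C' + b) - Real.log b with hK
    have hg : Tendsto (fun n => (Real.log ((a:ℝ) * χ n + b) - Real.log b) / (deltaCard d n : ℝ))
        atTop (nhds 0) := by
      apply squeeze_zero (g := fun n => K / (deltaCard d n : ℝ))
      · intro n
        apply div_nonneg _ (hΔpos n).le
        have hxb : (b:ℝ) ≤ (a:ℝ) * χ n + b := by nlinarith [hchi1 n]
        linarith [Real.log_le_log hbr hxb]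
      · intro n
        have hxp : (0:ℝ) < (a:ℝ) * χ n + b := by nlinarith [hchi1 n]
        have hlog : Real.log ((a:ℝ) * χ n + b) ≤ Real.log ((a:ℝ) * C' + b) :=
          Real.log_le_log hxp (by nlinarith [hC1 n])
        exact (div_le_div_iff_of_pos_right (hΔpos n)).2 (by rw [hK]; linarith)
      · exact Tendsto.div_atTop tendsto_const_nhds hΔtop
    have hft : Tendsto f atTop (nhds (Real.log b)) := by
      have h2 : Tendsto (fun n => Real.log b
          + (Real.log ((a:ℝ) * χ n + b) - Real.log b) / (deltaCard d n : ℝ))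
          atTop (nhds (Real.log b + 0)) := tendsto_const_nhds.add hg
      rw [add_zero] at h2
      exact Tendsto.congr (fun n => (hkey n).symm) h2
    exact hft.limsup_eq
  -- Part 2
  have part2 : Tendsto χ atTop atTop → Filter.limsup f atTop > Real.log b := by
    intro htop
    have har0 : (0:ℝ) < (a:ℝ) := lt_of_lt_of_le one_pos har
    have hd1r : (0:ℝ) < (d:ℝ) - 1 := by linarith
    have habr : (a:ℝ) < (b:ℝ) := by exact_mod_cast hab
    set K0 := (d:ℝ) / ((d:ℝ) - 1) * Real.log ((a:ℝ)/(b:ℝ)) with hK0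
    have hK0le : K0 ≤ 0 := by
      apply mul_nonpos_of_nonneg_of_nonpos
      · positivity
      · exact Real.log_nonpos (by positivity) ((div_le_one hbr).2 habr.le)
    obtain ⟨N, hN⟩ := (htop.eventually_ge_atTop (Real.exp (1 - K0))).exists
    have hyN : 1 ≤ Real.log (χ N) + K0 := by
      have h := Real.log_le_log (Real.exp_pos _) hN
      rw [Real.log_exp] at h
      linarith
    set y := Real.log (χ N) + K0 with hy
    have hy1 : (0:ℝ) < y := lt_of_lt_of_le one_pos hyN
    have hgrow : ∀ m, (d:ℝ)^m * y ≤ Real.log (χ (N+m)) + K0 := by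
      intro m
      induction m with
      | zero => simp [hy]
      | succ m ih =>
        have hχm : 1 ≤ χ (N+m) := hchi1 _
        have hχmp : (0:ℝ) < χ (N+m) := lt_of_lt_of_le one_pos hχm
        have hxpos : (0:ℝ) < (a:ℝ) * χ (N+m) / b := by positivity
        have hstep : (d:ℝ) * Real.log ((a:ℝ)/b) + (d:ℝ) * Real.log (χ (N+m))
            ≤ Real.log (χ (N+m+1)) := by
          rw [show N+m+1 = (N+m)+1 from rfl, hχ (N+m), Real.log_pow]
          have heq : Real.log ((a:ℝ)/b) + Real.log (χ (N+m))
              = Real.log ((a:ℝ) * χ (N+m) / b) := by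
            rw [show (a:ℝ) * χ (N+m) / b = (a:ℝ)/b * χ (N+m) by ring,
              Real.log_mul (div_pos har0 hbr).ne' hχmp.ne']
          have hle : (a:ℝ) * χ (N+m) / b ≤ ((a:ℝ) * χ (N+m) + l) / b := by
            have hl0 : (0:ℝ) ≤ (l:ℝ) := Nat.cast_nonneg l
            exact (div_le_div_iff_of_pos_right hbr).2 (by linarith)
          have hlog := Real.log_le_log hxpos hle
          calc (d:ℝ) * Real.log ((a:ℝ)/b) + (d:ℝ) * Real.log (χ (N+m))
              = (d:ℝ) * (Real.log ((a:ℝ)/b) + Real.log (χ (N+m))) := by ring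
            _ = (d:ℝ) * Real.log ((a:ℝ) * χ (N+m) / b) := by rw [heq]
            _ ≤ (d:ℝ) * Real.log (((a:ℝ) * χ (N+m) + l) / b) :=
                mul_le_mul_of_nonneg_left hlog (by positivity)
        have hbr2 : (d:ℝ) * Real.log ((a:ℝ)/b) + K0 = (d:ℝ) * K0 := by
          rw [hK0]
          field_simp
          ring
        have hmul : (d:ℝ) * ((d:ℝ)^m * y) ≤ (d:ℝ) * (Real.log (χ (N+m)) + K0) :=
          mul_le_mul_of_nonneg_left ih (by positivity)
        calc (d:ℝ)^(m+1) * y = (d:ℝ) * ((d:ℝ)^m * y) := by ring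
          _ ≤ (d:ℝ) * (Real.log (χ (N+m)) + K0) := hmul
          _ ≤ Real.log (χ (N+m+1)) + K0 := by nlinarith [hstep, hbr2]
    set ε := y / (2 * (d:ℝ)^N) with hε
    have hεpos : 0 < ε := by positivity
    have hlower : ∀ m, ε ≤ Real.log (χ (N+m)) / (deltaCard d (N+m) : ℝ) := by
      intro m
      have h1 : (d:ℝ)^m * y ≤ Real.log (χ (N+m)) := by
        have := hgrow m
        linarith
      have h2 : (deltaCard d (N+m) : ℝ) ≤ 2 * (d:ℝ)^(N+m) := by
        exact_mod_cast deltaCard_le d (N+m) hd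
      have h3 : (0:ℝ) ≤ (d:ℝ)^m * y := by positivity
      have h4 : ε = (d:ℝ)^m * y / (2 * (d:ℝ)^(N+m)) := by
        rw [hε, pow_add]
        have : ((d:ℝ)^m) ≠ 0 := by positivity
        field_simp
      rw [h4]
      exact div_le_div₀ (h3.trans h1) h1 (hΔpos _) h2
    have hfge : ∀ᶠ n in atTop, Real.log b + ε/2 ≤ f n := by
      have hev1 : ∀ᶠ n : ℕ in atTop, Real.log b / (deltaCard d n : ℝ) < ε/2 :=
        (Tendsto.div_atTop tendsto_const_nhds hΔtop).eventually_lt_const (by positivity)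
      filter_upwards [hev1, eventually_ge_atTop N] with n h1 h2
      obtain ⟨m, rfl⟩ := Nat.exists_eq_add_of_le h2
      have hχn := hchi1 (N+m)
      have hloglog : Real.log (χ (N+m)) ≤ Real.log ((a:ℝ) * χ (N+m) + b) :=
        Real.log_le_log (by linarith) (by nlinarith)
      rw [hkey (N+m)]
      have h5 := hlower m
      have h6 : (Real.log (χ (N+m)) - Real.log b) / (deltaCard d (N+m) : ℝ)
          ≤ (Real.log ((a:ℝ) * χ (N+m) + b) - Real.log b) / (deltaCard d (N+m) : ℝ) :=
        (div_le_div_iff_of_pos_right (hΔpos _)).2 (by linarith)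
      have h7 : (Real.log (χ (N+m)) - Real.log b) / (deltaCard d (N+m) : ℝ)
          = Real.log (χ (N+m)) / (deltaCard d (N+m) : ℝ)
            - Real.log b / (deltaCard d (N+m) : ℝ) := sub_div _ _ _
      linarith
    have hbound : IsBoundedUnder (· ≤ ·) atTop f :=
      isBoundedUnder_of ⟨Real.log (a+b), hfle⟩
    have hlim := le_limsup_of_frequently_le hfge.frequently hbound
    linarith
  refine ⟨part1, part2, ?_, part1⟩
  intro heq
  by_contra hnb
  push_neg at hnb
  have htop : Tendsto χ atTop atTop := by
    rw [tendsto_atTop]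
    intro C
    obtain ⟨n0, hn0⟩ := hnb C
    exact eventually_atTop.2 ⟨n0, fun m hm => le_trans hn0.le (hmono hm)⟩
  exact absurd heq (ne_of_gt (part2 htop))


/-- For `b > a ≥ 1`, `0 < l ≤ b` with `a + l > b` and the auxiliary orbit
`χ₀ = 1`, `χ_{n+1} = ((a·χ_n + l)/b)^d`: `h(T_{M(a,b;l)}) = log b` when `(χ_n)` is
bounded, `h(T_{M(a,b;l)}) > log b` when `χ_n → ∞`; in particular
`h(T_{M(a,b;l)}) = log b ↔ (χ_n)` is bounded. -/
theorem treeEntropy_Mabl_iff_bounded {d a b l : ℕ} (hd : 2 ≤ d)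
    (ha : 1 ≤ a) (hab : a < b) (hl : 0 < l) (hlb : l ≤ b) (hsum : b < a + l)
    (M : Matrix (Fin (a + b)) (Fin (a + b)) ℕ) (hM : IsMabl a b l M)
    (χ : ℕ → ℝ) (hχ0 : χ 0 = 1)
    (hχ : ∀ n, χ (n + 1) = (((a : ℝ) * χ n + l) / b) ^ d) :
    ((∃ C : ℝ, ∀ n, χ n ≤ C) → treeEntropy d M = Real.log b) ∧
    (Filter.Tendsto χ Filter.atTop Filter.atTop → treeEntropy d M > Real.log b) ∧
    (treeEntropy d M = Real.log b ↔ ∃ C : ℝ, ∀ n, χ n ≤ C) :=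
  mabl_main hd ha hab hl hlb hsum M hM χ hχ0 hχ
end
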